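/- arXiv:1105.4681 — 7 statements merged into one kernel-verified Lean document; each statement's English description precedes it below -/
import Mathlib

section
/- Mirror descent regret bound (Lemma 2 of the paper). Assume the mirror-descent setup with strong convexity D(x,y) ≥ (1/2)‖x−y‖² for all x,y ∈ X and radius bound D(x,y) ≤ (1/2)R² for all x,y ∈ X. Let x : ℕ → X, g : ℕ → E*, and positive nonincreasing stepsizes η : ℕ → ℝ satisfy, for every t, the first-order optimality condition (η(t)·g(t) + ψ'(x(t+1)) − ψ'(x(t)))(y − x(t+1)) ≥ 0 for all y ∈ X. Suppose that for each t a function Φ_t : E → ℝ satisfies the subgradient inequality Φ_t(y) ≥ Φ_t(x(t)) + g(t)(y − x(t)) for all y ∈ X. Then for every x* ∈ X and all natural numbers τ < T: ∑_{t=τ+1}^{T} (Φ_t(x(t)) − Φ_t(x*)) ≤ R²/(2η(T)) + ∑_{t=τ+1}^{T} (η(t)/2)·‖g(t)‖_*². -/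
open Finset

/-- Mirror descent regret bound (Lemma 2 of the paper). -/
theorem mirror_descent_regret_bound
    {E : Type*} [NormedAddCommGroup E] [NormedSpace ℝ E]
    (X : Set E) (hXne : X.Nonempty) (hXconv : Convex ℝ X)
    (ψ : E → ℝ) (ψ' : E → StrongDual ℝ E)
    (D : E → E → ℝ)
    (hD : ∀ x y : E, D x y = ψ x - ψ y - ψ' y (x - y))
    (R : ℝ) (hR : 0 < R)
    (hstrong : ∀ x ∈ X, ∀ y ∈ X, (1 / 2 : ℝ) * ‖x - y‖ ^ 2 ≤ D x y)
    (hradius : ∀ x ∈ X, ∀ y ∈ X, D x y ≤ (1 / 2 : ℝ) * R ^ 2)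
    (x : ℕ → E) (hx : ∀ t, x t ∈ X)
    (g : ℕ → StrongDual ℝ E)
    (η : ℕ → ℝ) (hηpos : ∀ t, 0 < η t)
    (hηmono : ∀ s t : ℕ, s ≤ t → η t ≤ η s)
    (hopt : ∀ t : ℕ, ∀ y ∈ X,
      0 ≤ (η t • g t + ψ' (x (t + 1)) - ψ' (x t)) (y - x (t + 1)))
    (Φ : ℕ → E → ℝ)
    (hsub : ∀ t : ℕ, ∀ y ∈ X, Φ t (x t) + g t (y - x t) ≤ Φ t y)
    (xstar : E) (hxstar : xstar ∈ X)
    (τ T : ℕ) (hτT : τ < T) :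
    ∑ t ∈ Finset.Icc (τ + 1) T, (Φ t (x t) - Φ t xstar)
      ≤ R ^ 2 / (2 * η T) + ∑ t ∈ Finset.Icc (τ + 1) T, (η t / 2) * ‖g t‖ ^ 2 := by
  -- nonnegativity and radius bound for D between iterates and xstar
  have hDnonneg : ∀ s : ℕ, 0 ≤ D xstar (x s) := fun s => by
    have := hstrong xstar hxstar (x s) (hx s)
    nlinarith [sq_nonneg ‖xstar - x s‖]
  have hDle : ∀ s : ℕ, D xstar (x s) ≤ R ^ 2 / 2 := fun s => by
    have := hradius xstar hxstar (x s) (hx s); linarith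
  -- per-step bound
  have hstep : ∀ t : ℕ, Φ t (x t) - Φ t xstar
      ≤ (η t / 2) * ‖g t‖ ^ 2 + (D xstar (x t) - D xstar (x (t + 1))) / η t := by
    intro t
    have hη := hηpos t
    have h1 := hsub t xstar hxstar
    have h2 := hopt t xstar hxstar
    simp only [ContinuousLinearMap.add_apply, ContinuousLinearMap.sub_apply,
      ContinuousLinearMap.smul_apply, smul_eq_mul] at h2
    -- three point identity
    have h3 : ψ' (x (t + 1)) (xstar - x (t + 1)) - ψ' (x t) (xstar - x (t + 1))
        = D xstar (x t) - D xstar (x (t + 1)) - D (x (t + 1)) (x t) := by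
      simp only [hD, map_sub]; ring
    have h4 : g t (xstar - x t) = g t (xstar - x (t + 1)) - g t (x t - x (t + 1)) := by
      simp only [map_sub]; ring
    -- bound from optimality
    have h5 : -((D xstar (x t) - D xstar (x (t + 1)) - D (x (t + 1)) (x t)) / η t)
        ≤ g t (xstar - x (t + 1)) := by
      rw [neg_le, le_div_iff₀ hη]
      nlinarith [h2, h3]
    -- Cauchy–Schwarz type bound
    have h6 : g t (x t - x (t + 1)) ≤ ‖g t‖ * ‖x t - x (t + 1)‖ := by
      have := (g t).le_opNorm (x t - x (t + 1))
      rw [Real.norm_eq_abs] at this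
      exact le_trans (le_abs_self _) this
    -- strong convexity
    have h7 : (1 / 2 : ℝ) * ‖x t - x (t + 1)‖ ^ 2 ≤ D (x (t + 1)) (x t) := by
      have := hstrong (x (t + 1)) (hx (t + 1)) (x t) (hx t)
      rwa [norm_sub_rev]
    -- AM-GM
    have key : ‖g t‖ * ‖x t - x (t + 1)‖
        ≤ η t / 2 * ‖g t‖ ^ 2 + ‖x t - x (t + 1)‖ ^ 2 / (2 * η t) := by
      have h2η : (0:ℝ) < 2 * η t := by positivity
      have hb : ‖x t - x (t + 1)‖ ^ 2 / (2 * η t) * (2 * η t) = ‖x t - x (t + 1)‖ ^ 2 :=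
        div_mul_cancel₀ _ (ne_of_gt h2η)
      nlinarith [sq_nonneg (η t * ‖g t‖ - ‖x t - x (t + 1)‖), hb, hη, mul_pos hη hη]
    have h8 : ‖x t - x (t + 1)‖ ^ 2 / (2 * η t) ≤ D (x (t + 1)) (x t) / η t := by
      rw [div_le_div_iff₀ (by positivity) hη]
      nlinarith [h7, hη]
    have h9 : (D xstar (x t) - D xstar (x (t + 1)) - D (x (t + 1)) (x t)) / η t
        + D (x (t + 1)) (x t) / η t
        = (D xstar (x t) - D xstar (x (t + 1))) / η t := by ring
    linarith
  -- telescoping bound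
  have htele : ∀ T' : ℕ, τ + 1 ≤ T' →
      ∑ t ∈ Finset.Icc (τ + 1) T', (D xstar (x t) - D xstar (x (t + 1))) / η t
        ≤ (R ^ 2 / 2 - D xstar (x (T' + 1))) / η T' := by
    intro T' hT'
    induction T', hT' using Nat.le_induction with
    | base =>
        rw [Finset.Icc_self, Finset.sum_singleton]
        gcongr
        · exact le_of_lt (hηpos _)
        · exact hDle _
    | succ n hn ih =>
        rw [Finset.sum_Icc_succ_top (by omega : τ + 1 ≤ n + 1)]
        have hmono : (R ^ 2 / 2 - D xstar (x (n + 1))) / η n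
            ≤ (R ^ 2 / 2 - D xstar (x (n + 1))) / η (n + 1) := by
          gcongr
          · have := hDle (n + 1); linarith
          · exact hηpos _
          · exact hηmono n (n + 1) (by omega)
        have heq : (R ^ 2 / 2 - D xstar (x (n + 1))) / η (n + 1)
            + (D xstar (x (n + 1)) - D xstar (x (n + 2))) / η (n + 1)
            = (R ^ 2 / 2 - D xstar (x (n + 2))) / η (n + 1) := by ring
        linarith
  have hsum : ∑ t ∈ Finset.Icc (τ + 1) T, (Φ t (x t) - Φ t xstar)
      ≤ ∑ t ∈ Finset.Icc (τ + 1) T,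
        ((η t / 2) * ‖g t‖ ^ 2 + (D xstar (x t) - D xstar (x (t + 1))) / η t) :=
    Finset.sum_le_sum fun t _ => hstep t
  rw [Finset.sum_add_distrib] at hsum
  have h10 := htele T (by omega)
  have h11 : (R ^ 2 / 2 - D xstar (x (T + 1))) / η T ≤ R ^ 2 / (2 * η T) := by
    have hd := hDnonneg (T + 1)
    have : R ^ 2 / 2 / η T = R ^ 2 / (2 * η T) := by ring
    rw [← this]
    gcongr
    · exact le_of_lt (hηpos T)
    · linarith
  linarith
end

section
/- Hellinger–Cauchy–Schwarz inequality (core inequality in the proof of Lemma 4 of the paper). Let (S, 𝒜, μ) be a measure space and let h, p, q : S → ℝ be measurable with p ≥ 0 and q ≥ 0 pointwise. Assume that h²·p, h²·q, (√p − √q)², and |h|·|p − q| are μ-integrable. Then ∫ |h(s)|·|p(s) − q(s)| dμ(s) ≤ √2 · ( ∫ h(s)²·p(s) dμ(s) + ∫ h(s)²·q(s) dμ(s) )^{1/2} · ( ∫ (√(p(s)) − √(q(s)))² dμ(s) )^{1/2}. -/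
open MeasureTheory

/-- Hellinger–Cauchy–Schwarz inequality (core inequality in the proof of Lemma 4
of the paper). -/
theorem hellinger_cauchy_schwarz
    {S : Type*} [MeasurableSpace S] (μ : Measure S)
    (h p q : S → ℝ)
    (hh : Measurable h) (hp : Measurable p) (hq : Measurable q)
    (hp0 : ∀ s, 0 ≤ p s) (hq0 : ∀ s, 0 ≤ q s)
    (hint1 : Integrable (fun s => (h s) ^ 2 * p s) μ)
    (hint2 : Integrable (fun s => (h s) ^ 2 * q s) μ)
    (hint3 : Integrable (fun s => (Real.sqrt (p s) - Real.sqrt (q s)) ^ 2) μ)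
    (hint4 : Integrable (fun s => |h s| * |p s - q s|) μ) :
    ∫ s, |h s| * |p s - q s| ∂μ
      ≤ Real.sqrt 2
        * Real.sqrt (∫ s, (h s) ^ 2 * p s ∂μ + ∫ s, (h s) ^ 2 * q s ∂μ)
        * Real.sqrt (∫ s, (Real.sqrt (p s) - Real.sqrt (q s)) ^ 2 ∂μ) := by
  set F : S → ℝ := fun s => |h s| * Real.sqrt (p s + q s) with hF
  set G : S → ℝ := fun s => |Real.sqrt (p s) - Real.sqrt (q s)| with hG
  have hFmeas : Measurable F := (hh.abs.mul ((hp.add hq).sqrt))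
  have hGmeas : Measurable G := (hp.sqrt.sub hq.sqrt).abs
  have hF0 : ∀ s, 0 ≤ F s := fun s => mul_nonneg (abs_nonneg _) (Real.sqrt_nonneg _)
  have hG0 : ∀ s, 0 ≤ G s := fun s => abs_nonneg _
  have hFsq : ∀ s, F s ^ 2 = (h s) ^ 2 * p s + (h s) ^ 2 * q s := by
    intro s
    have : Real.sqrt (p s + q s) ^ 2 = p s + q s :=
      Real.sq_sqrt (add_nonneg (hp0 s) (hq0 s))
    simp [hF, mul_pow, this, sq_abs, mul_add]
  have hGsq : ∀ s, G s ^ 2 = (Real.sqrt (p s) - Real.sqrt (q s)) ^ 2 := fun s => sq_abs _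
  have hFsq_int : Integrable (fun s => F s ^ 2) μ := by
    simp only [hFsq]
    exact hint1.add hint2
  have hGsq_int : Integrable (fun s => G s ^ 2) μ := by simpa [hGsq] using hint3
  -- pointwise : |h| * |p - q| ≤ √2 * (F * G)
  have hpt : ∀ s, |h s| * |p s - q s| ≤ Real.sqrt 2 * (F s * G s) := by
    intro s
    have habs : |p s - q s| = (Real.sqrt (p s) + Real.sqrt (q s)) * G s := by
      have : p s - q s = (Real.sqrt (p s) + Real.sqrt (q s)) *
          (Real.sqrt (p s) - Real.sqrt (q s)) := by
        have hps : Real.sqrt (p s) ^ 2 = p s := Real.sq_sqrt (hp0 s)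
        have hqs : Real.sqrt (q s) ^ 2 = q s := Real.sq_sqrt (hq0 s)
        ring_nf
        nlinarith [hps, hqs]
      rw [this, abs_mul, abs_of_nonneg (add_nonneg (Real.sqrt_nonneg _) (Real.sqrt_nonneg _))]
    have hsum : Real.sqrt (p s) + Real.sqrt (q s) ≤ Real.sqrt 2 * Real.sqrt (p s + q s) := by
      rw [← Real.sqrt_mul (by norm_num : (0:ℝ) ≤ 2)]
      calc Real.sqrt (p s) + Real.sqrt (q s)
          = Real.sqrt ((Real.sqrt (p s) + Real.sqrt (q s)) ^ 2) := by
            rw [Real.sqrt_sq (add_nonneg (Real.sqrt_nonneg _) (Real.sqrt_nonneg _))]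
        _ ≤ Real.sqrt (2 * (p s + q s)) := by
            apply Real.sqrt_le_sqrt
            nlinarith [Real.sq_sqrt (hp0 s), Real.sq_sqrt (hq0 s),
              sq_nonneg (Real.sqrt (p s) - Real.sqrt (q s))]
    calc |h s| * |p s - q s| = |h s| * ((Real.sqrt (p s) + Real.sqrt (q s)) * G s) := by
          rw [habs]
      _ ≤ |h s| * ((Real.sqrt 2 * Real.sqrt (p s + q s)) * G s) := by
          apply mul_le_mul_of_nonneg_left _ (abs_nonneg _)
          exact mul_le_mul_of_nonneg_right hsum (hG0 s)
      _ = Real.sqrt 2 * (F s * G s) := by simp [hF]; ring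
  -- F*G is integrable
  have hFG_int : Integrable (fun s => F s * G s) μ := by
    refine Integrable.mono' ((hFsq_int.add hGsq_int).div_const 2) ((hFmeas.mul hGmeas).aestronglyMeasurable) ?_
    filter_upwards with s
    rw [Real.norm_of_nonneg (mul_nonneg (hF0 s) (hG0 s))]
    simp only [Pi.add_apply]
    nlinarith [sq_nonneg (F s - G s)]
  -- Cauchy-Schwarz
  have hFLp : MemLp F 2 μ := by
    rw [memLp_two_iff_integrable_sq hFmeas.aestronglyMeasurable]
    exact hFsq_int
  have hGLp : MemLp G 2 μ := by
    rw [memLp_two_iff_integrable_sq hGmeas.aestronglyMeasurable]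
    exact hGsq_int
  have hCS : ∫ s, F s * G s ∂μ ≤ (∫ s, F s ^ 2 ∂μ) ^ ((1:ℝ)/2) * (∫ s, G s ^ 2 ∂μ) ^ ((1:ℝ)/2) := by
    have hconj : Real.HolderConjugate 2 2 := Real.HolderConjugate.two_two
    have := integral_mul_le_Lp_mul_Lq_of_nonneg hconj
      (Filter.Eventually.of_forall hF0) (Filter.Eventually.of_forall hG0)
      (by simpa using hFLp) (by simpa using hGLp)
    simp only [Real.rpow_two] at this
    exact this
  have step1 : ∫ s, |h s| * |p s - q s| ∂μ ≤ Real.sqrt 2 * ∫ s, F s * G s ∂μ := by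
    rw [← integral_const_mul]
    exact integral_mono hint4 (hFG_int.const_mul _) hpt
  have hFint : ∫ s, F s ^ 2 ∂μ = ∫ s, (h s) ^ 2 * p s ∂μ + ∫ s, (h s) ^ 2 * q s ∂μ := by
    simp_rw [hFsq]
    exact integral_add hint1 hint2
  have hGint : ∫ s, G s ^ 2 ∂μ = ∫ s, (Real.sqrt (p s) - Real.sqrt (q s)) ^ 2 ∂μ := by
    simp_rw [hGsq]
  calc ∫ s, |h s| * |p s - q s| ∂μ ≤ Real.sqrt 2 * ∫ s, F s * G s ∂μ := step1
    _ ≤ Real.sqrt 2 * ((∫ s, F s ^ 2 ∂μ) ^ ((1:ℝ)/2) * (∫ s, G s ^ 2 ∂μ) ^ ((1:ℝ)/2)) := by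
        exact mul_le_mul_of_nonneg_left hCS (Real.sqrt_nonneg 2)
    _ = Real.sqrt 2 * Real.sqrt (∫ s, (h s) ^ 2 * p s ∂μ + ∫ s, (h s) ^ 2 * q s ∂μ)
        * Real.sqrt (∫ s, (Real.sqrt (p s) - Real.sqrt (q s)) ^ 2 ∂μ) := by
        rw [hFint, hGint, ← Real.sqrt_eq_rpow, ← Real.sqrt_eq_rpow, ← mul_assoc]
end

section
/- Conditional stability lemma (first statement of Lemma 5 of the paper). Let (Ω, 𝔉, P) be a probability space with filtration (𝔉_s)_{s∈ℕ}, S a measurable space, E a real normed vector space, X ⊆ E, F : E × S → ℝ measurable, L ≥ 0, and η : ℕ → ℝ nonnegative and nonincreasing. Let ξ_s : Ω → S be 𝔉_s-measurable for each s. Assume: (i) conditional Lipschitz property: for every s and every pair u, v of X-valued 𝔉_s-measurable random vectors (with F(u; ξ_{s+1}) and F(v; ξ_{s+1}) integrable), |E[F(u; ξ_{s+1}) − F(v; ξ_{s+1}) | 𝔉_s]| ≤ L·‖u − v‖ almost surely; (ii) x(s) is an X-valued 𝔉_{s−1}-measurable random vector for each s ≥ 1, and there are nonnegative 𝔉_s-measurable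 random variables G(s), square-integrable, with ‖x(s) − x(s+1)‖ ≤ η(s)·G(s) almost surely and E[G(s)² | 𝔉_{s−1}] ≤ L² almost surely. Then for all t ≥ 1 and τ ≥ 0 (with the relevant random variables integrable): E[F(x(t); ξ_{t+τ}) − F(x(t+τ); ξ_{t+τ}) | 𝔉_{t−1}] ≤ τ·η(t)·L² almost surely. -/
open MeasureTheory


/-- If `E[G^2 | m] ≤ L^2` a.e., `G ≥ 0`, `G ∈ L²`, then `E[G | m] ≤ L` a.e. -/
lemma condExp_le_of_sq_le {Ω : Type*} {m0 : MeasurableSpace Ω} (μ : Measure Ω)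
    [IsProbabilityMeasure μ] {m : MeasurableSpace Ω} (hm : m ≤ m0)
    {G : Ω → ℝ} (hG2 : MemLp G 2 μ) (hG0 : ∀ ω, 0 ≤ G ω)
    {L : ℝ} (hL : 0 ≤ L)
    (hsq : ∀ᵐ ω ∂μ, (μ[(fun ω => (G ω) ^ 2) | m]) ω ≤ L ^ 2) :
    ∀ᵐ ω ∂μ, (μ[G | m]) ω ≤ L := by
  have hGint : Integrable G μ := hG2.integrable one_le_two
  have hG2int : Integrable (fun ω => G ω ^ 2) μ := hG2.integrable_sq
  have key : ∀ q : ℚ, 0 < (q : ℝ) →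
      ∀ᵐ ω ∂μ, (μ[G | m]) ω ≤ (L ^ 2 + (q : ℝ) ^ 2) / (2 * q) := by
    intro q hq
    have hpt : ∀ ω, G ω ≤ (G ω ^ 2 + (q : ℝ) ^ 2) / (2 * q) := by
      intro ω
      rw [le_div_iff₀ (by positivity)]
      nlinarith [sq_nonneg (G ω - q)]
    have hRint : Integrable (fun ω => (G ω ^ 2 + (q : ℝ) ^ 2) / (2 * q)) μ :=
      (hG2int.add (integrable_const _)).div_const _
    have h1 := condExp_mono (m := m) hGint hRint (Filter.Eventually.of_forall hpt)
    have h2 : (μ[(fun ω => (G ω ^ 2 + (q : ℝ) ^ 2) / (2 * q)) | m]) =ᵐ[μ]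
        fun ω => ((μ[(fun ω => (G ω) ^ 2) | m]) ω + (q : ℝ) ^ 2) / (2 * q) := by
      have e1 : (fun ω => (G ω ^ 2 + (q : ℝ) ^ 2) / (2 * q)) =
          (2 * (q : ℝ))⁻¹ • ((fun ω => G ω ^ 2) + fun _ => (q : ℝ) ^ 2) := by
        funext ω; simp [div_eq_inv_mul, Pi.add_apply, smul_eq_mul]
      rw [e1]
      calc μ[(2 * (q : ℝ))⁻¹ • ((fun ω => G ω ^ 2) + fun _ => (q : ℝ) ^ 2) | m]
          =ᵐ[μ] (2 * (q : ℝ))⁻¹ • μ[((fun ω => G ω ^ 2) + fun _ => (q : ℝ) ^ 2) | m] :=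
            condExp_smul _ _ _
        _ =ᵐ[μ] fun ω => ((μ[(fun ω => (G ω) ^ 2) | m]) ω + (q : ℝ) ^ 2) / (2 * q) := by
            filter_upwards [condExp_add hG2int (integrable_const ((q : ℝ) ^ 2)) (m := m)]
              with ω hω
            rw [Pi.smul_apply, hω, condExp_const hm]
            simp [div_eq_inv_mul]
    filter_upwards [h1, h2, hsq] with ω h1ω h2ω hsqω
    have := h1ω.trans_eq h2ω
    calc (μ[G | m]) ω ≤ ((μ[(fun ω => (G ω) ^ 2) | m]) ω + (q : ℝ) ^ 2) / (2 * q) := this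
      _ ≤ (L ^ 2 + (q : ℝ) ^ 2) / (2 * q) :=
          (div_le_div_iff_of_pos_right (by positivity)).mpr (by linarith)
  have hall : ∀ᵐ ω ∂μ, ∀ q : ℚ, 0 < (q : ℝ) →
      (μ[G | m]) ω ≤ (L ^ 2 + (q : ℝ) ^ 2) / (2 * q) := by
    rw [ae_all_iff]
    intro q
    by_cases hq : 0 < (q : ℝ)
    · filter_upwards [key q hq] with ω hω _; exact hω
    · filter_upwards with ω hq'; exact absurd hq' hq
  filter_upwards [hall] with ω hω
  by_contra hcon
  push_neg at hcon
  obtain ⟨q, hq1, hq2⟩ := exists_rat_btwn hcon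
  have hqpos : 0 < (q : ℝ) := lt_of_le_of_lt hL hq1
  have h := hω q hqpos
  rw [le_div_iff₀ (by positivity)] at h
  nlinarith

/-- Conditional stability lemma (first statement of Lemma 5 of the paper). -/
theorem conditional_stability
    {Ω : Type*} {m0 : MeasurableSpace Ω} (μ : Measure Ω) [IsProbabilityMeasure μ]
    (ℱ : Filtration ℕ m0)
    {S : Type*} [MeasurableSpace S]
    {E : Type*} [NormedAddCommGroup E] [NormedSpace ℝ E]
    [MeasurableSpace E] [BorelSpace E]
    (X : Set E)
    (F : E → S → ℝ) (hF : Measurable (Function.uncurry F))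
    (L : ℝ) (hL : 0 ≤ L)
    (η : ℕ → ℝ) (hη0 : ∀ s, 0 ≤ η s)
    (hηmono : ∀ s t : ℕ, s ≤ t → η t ≤ η s)
    (ξ : ℕ → Ω → S) (hξ : ∀ s, Measurable[ℱ s] (ξ s))
    -- (i) conditional Lipschitz property
    (hCondLip : ∀ s : ℕ, ∀ u v : Ω → E,
      StronglyMeasurable[ℱ s] u → StronglyMeasurable[ℱ s] v →
      (∀ ω, u ω ∈ X) → (∀ ω, v ω ∈ X) →
      Integrable (fun ω => F (u ω) (ξ (s + 1) ω)) μ →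
      Integrable (fun ω => F (v ω) (ξ (s + 1) ω)) μ →
      ∀ᵐ ω ∂μ,
        |(μ[(fun ω => F (u ω) (ξ (s + 1) ω) - F (v ω) (ξ (s + 1) ω)) | ℱ s]) ω|
          ≤ L * ‖u ω - v ω‖)
    -- (ii) adapted iterates with controlled increments
    (x : ℕ → Ω → E)
    (hxmeas : ∀ s : ℕ, 1 ≤ s → StronglyMeasurable[ℱ (s - 1)] (x s))
    (hxX : ∀ s ω, x s ω ∈ X)
    (G : ℕ → Ω → ℝ)
    (hG0 : ∀ s ω, 0 ≤ G s ω)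
    (hGmeas : ∀ s, Measurable[ℱ s] (G s))
    (hGsq : ∀ s, MemLp (G s) 2 μ)
    (hstep : ∀ s : ℕ, ∀ᵐ ω ∂μ, ‖x s ω - x (s + 1) ω‖ ≤ η s * G s ω)
    (hGcond : ∀ s : ℕ,
      ∀ᵐ ω ∂μ, (μ[(fun ω => (G s ω) ^ 2) | ℱ (s - 1)]) ω ≤ L ^ 2) :
    ∀ t τ : ℕ, 1 ≤ t →
      Integrable (fun ω => F (x t ω) (ξ (t + τ) ω)) μ →
      Integrable (fun ω => F (x (t + τ) ω) (ξ (t + τ) ω)) μ →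
      ∀ᵐ ω ∂μ,
        (μ[(fun ω => F (x t ω) (ξ (t + τ) ω) - F (x (t + τ) ω) (ξ (t + τ) ω))
            | ℱ (t - 1)]) ω
          ≤ τ * η t * L ^ 2 := by
  intro t τ ht hInt1 hInt2
  rcases Nat.eq_zero_or_pos τ with hτ | hτ
  · subst hτ
    have hzero : (fun ω => F (x t ω) (ξ (t + 0) ω) - F (x (t + 0) ω) (ξ (t + 0) ω))
        = (0 : Ω → ℝ) := by
      funext ω; simp
    rw [hzero, condExp_zero]
    filter_upwards with ω
    simp
  · -- main case: τ ≥ 1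
    set f : Ω → ℝ :=
      fun ω => F (x t ω) (ξ (t + τ) ω) - F (x (t + τ) ω) (ξ (t + τ) ω) with hf
    -- Step 1: conditional Lipschitz at level t + τ - 1
    have hmeas1 : StronglyMeasurable[ℱ (t + τ - 1)] (x t) :=
      (hxmeas t ht).mono (ℱ.mono (by omega))
    have hmeas2 : StronglyMeasurable[ℱ (t + τ - 1)] (x (t + τ)) := by
      have := hxmeas (t + τ) (by omega)
      exact this
    have hs1 : t + τ - 1 + 1 = t + τ := by omega
    have h1 : ∀ᵐ ω ∂μ,
        |(μ[f | ℱ (t + τ - 1)]) ω| ≤ L * ‖x t ω - x (t + τ) ω‖ := by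
      have := hCondLip (t + τ - 1) (x t) (x (t + τ)) hmeas1 hmeas2
        (fun ω => hxX t ω) (fun ω => hxX (t + τ) ω)
      rw [hs1] at this
      exact this hInt1 hInt2
    -- Step 2: telescoping bound on the norm
    have hnorm : ∀ᵐ ω ∂μ,
        ‖x t ω - x (t + τ) ω‖ ≤ ∑ i ∈ Finset.range τ, η t * G (t + i) ω := by
      have hall : ∀ᵐ ω ∂μ, ∀ s : ℕ, ‖x s ω - x (s + 1) ω‖ ≤ η s * G s ω :=
        ae_all_iff.2 hstep
      filter_upwards [hall] with ω hω
      have htel : x t ω - x (t + τ) ω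
          = ∑ i ∈ Finset.range τ, (x (t + i) ω - x (t + i + 1) ω) :=
        (Finset.sum_range_sub' (fun i => x (t + i) ω) τ).symm
      calc ‖x t ω - x (t + τ) ω‖
          = ‖∑ i ∈ Finset.range τ, (x (t + i) ω - x (t + i + 1) ω)‖ := by rw [htel]
        _ ≤ ∑ i ∈ Finset.range τ, ‖x (t + i) ω - x (t + i + 1) ω‖ :=
            norm_sum_le _ _
        _ ≤ ∑ i ∈ Finset.range τ, η t * G (t + i) ω := by
            apply Finset.sum_le_sum
            intro i _
            calc ‖x (t + i) ω - x (t + i + 1) ω‖ ≤ η (t + i) * G (t + i) ω := hω (t + i)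
              _ ≤ η t * G (t + i) ω :=
                  mul_le_mul_of_nonneg_right (hηmono t (t + i) (by omega)) (hG0 _ _)
    -- define g as a finite sum of functions
    set g : Ω → ℝ := ∑ i ∈ Finset.range τ, (L * η t) • G (t + i) with hg
    have hgapply : ∀ ω, g ω = ∑ i ∈ Finset.range τ, (L * η t) * G (t + i) ω := by
      intro ω
      rw [hg, Finset.sum_apply]
      simp [smul_eq_mul]
    have h2 : (μ[f | ℱ (t + τ - 1)]) ≤ᵐ[μ] g := by
      filter_upwards [h1, hnorm] with ω h1ω hnω
      have : (μ[f | ℱ (t + τ - 1)]) ω ≤ L * ‖x t ω - x (t + τ) ω‖ :=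
        (le_abs_self _).trans h1ω
      refine this.trans ?_
      rw [hgapply]
      calc L * ‖x t ω - x (t + τ) ω‖
          ≤ L * ∑ i ∈ Finset.range τ, η t * G (t + i) ω :=
            mul_le_mul_of_nonneg_left hnω hL
        _ = ∑ i ∈ Finset.range τ, L * (η t * G (t + i) ω) := Finset.mul_sum _ _ _
        _ = ∑ i ∈ Finset.range τ, L * η t * G (t + i) ω := by
            apply Finset.sum_congr rfl; intro i _; ring
    have hGint : ∀ i : ℕ, Integrable (G i) μ := fun i => (hGsq i).integrable one_le_two
    have hgint : Integrable g μ := by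
      rw [hg]
      refine (integrable_finset_sum (Finset.range τ)
        fun i _ => ((hGint (t + i)).smul (L * η t))).congr ?_
      filter_upwards with a
      exact (Finset.sum_apply _ _ _).symm
    -- Step 3: tower property and monotonicity
    have h3 : (μ[f | ℱ (t - 1)]) =ᵐ[μ] μ[(μ[f | ℱ (t + τ - 1)]) | ℱ (t - 1)] :=
      (condExp_condExp_of_le (ℱ.mono (by omega)) (ℱ.le _)).symm
    have h4 : μ[(μ[f | ℱ (t + τ - 1)]) | ℱ (t - 1)] ≤ᵐ[μ] μ[g | ℱ (t - 1)] :=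
      condExp_mono integrable_condExp hgint h2
    -- Step 4: conditional expectation of g
    have h5 : (μ[g | ℱ (t - 1)]) =ᵐ[μ]
        fun ω => ∑ i ∈ Finset.range τ, (L * η t) * (μ[G (t + i) | ℱ (t - 1)]) ω := by
      rw [hg]
      calc μ[∑ i ∈ Finset.range τ, (L * η t) • G (t + i) | ℱ (t - 1)]
          =ᵐ[μ] ∑ i ∈ Finset.range τ, μ[(L * η t) • G (t + i) | ℱ (t - 1)] :=
            condExp_finset_sum (fun i _ => (hGint (t + i)).smul (L * η t)) _
        _ =ᵐ[μ] fun ω => ∑ i ∈ Finset.range τ, (L * η t) * (μ[G (t + i) | ℱ (t - 1)]) ω := by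
            have hs : ∀ᵐ ω ∂μ, ∀ i : ℕ,
                (μ[(L * η t) • G (t + i) | ℱ (t - 1)]) ω
                  = (L * η t) * (μ[G (t + i) | ℱ (t - 1)]) ω := by
              rw [ae_all_iff]
              intro i
              filter_upwards [condExp_smul (𝕜 := ℝ) (L * η t) (G (t + i))
                (m := ℱ (t - 1)) (μ := μ)] with ω hω
              rw [hω]; simp [smul_eq_mul]
            filter_upwards [hs] with ω hω
            rw [Finset.sum_apply]
            exact Finset.sum_congr rfl fun i _ => hω i
    -- Step 5: bound each conditional expectation of G
    have h6 : ∀ᵐ ω ∂μ, ∀ i : ℕ, (μ[G (t + i) | ℱ (t - 1)]) ω ≤ L := by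
      rw [ae_all_iff]
      intro i
      have haux : ∀ᵐ ω ∂μ, (μ[G (t + i) | ℱ (t + i - 1)]) ω ≤ L :=
        condExp_le_of_sq_le μ (ℱ.le _) (hGsq (t + i)) (hG0 (t + i)) hL (hGcond (t + i))
      have htower : (μ[G (t + i) | ℱ (t - 1)]) =ᵐ[μ]
          μ[(μ[G (t + i) | ℱ (t + i - 1)]) | ℱ (t - 1)] :=
        (condExp_condExp_of_le (ℱ.mono (by omega)) (ℱ.le _)).symm
      have hmono : μ[(μ[G (t + i) | ℱ (t + i - 1)]) | ℱ (t - 1)] ≤ᵐ[μ]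
          μ[(fun _ => L) | ℱ (t - 1)] :=
        condExp_mono integrable_condExp (integrable_const L) haux
      filter_upwards [htower, hmono] with ω hωt hωm
      rw [hωt]
      calc (μ[(μ[G (t + i) | ℱ (t + i - 1)]) | ℱ (t - 1)]) ω
          ≤ (μ[(fun _ => L) | ℱ (t - 1)]) ω := hωm
        _ = L := by rw [condExp_const (ℱ.le _)]
    -- Combine
    filter_upwards [h3, h4, h5, h6] with ω h3ω h4ω h5ω h6ω
    calc (μ[f | ℱ (t - 1)]) ω
        = (μ[(μ[f | ℱ (t + τ - 1)]) | ℱ (t - 1)]) ω := h3ω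
      _ ≤ (μ[g | ℱ (t - 1)]) ω := h4ω
      _ = ∑ i ∈ Finset.range τ, (L * η t) * (μ[G (t + i) | ℱ (t - 1)]) ω := h5ω
      _ ≤ ∑ i ∈ Finset.range τ, (L * η t) * L := by
          apply Finset.sum_le_sum
          intro i _
          exact mul_le_mul_of_nonneg_left (h6ω i) (mul_nonneg hL (hη0 t))
      _ = τ * η t * L ^ 2 := by
          rw [Finset.sum_const, Finset.card_range]
          ring
end

section
/- Deterministic master inequality for Ergodic Mirror Descent (inequality (bound-to-concentrate) in the paper). Assume the mirror-descent setup with strong convexity D(x,y) ≥ (1/2)‖x−y‖² and radius bound D(x,y) ≤ (1/2)R² for all x,y ∈ X. Let S be a set, ξ : ℕ → S a sequence, and F : E × S → ℝ a function such that for every s ∈ S the map F(·; s) is L-Lipschitz on X (|F(u;s) − F(v;s)| ≤ L‖u−v‖ for u,v ∈ X). Let f : E → ℝ be L-Lipschitz on X. Suppose the EMD iterates x : ℕ → X, g : ℕ → E*, with positive nonincreasing stepsizes η : ℕ → ℝ, satisfy for every t: (a) the first-order optimality condition (η(t)·g(t) + ψ'(x(t+1)) − ψ'(x(t)))(y − x(t+1))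 ≥ 0 for all y ∈ X; (b) the subgradient inequality F(y; ξ_t) ≥ F(x(t); ξ_t) + g(t)(y − x(t)) for all y ∈ X; and (c) ‖g(t)‖_* ≤ L. Then for every x* ∈ X and every natural number τ with 1 ≤ τ ≤ T: ∑_{t=1}^{T} (f(x(t)) − f(x*)) ≤ R²/(2η(T)) + (L²/2)·∑_{t=1}^{T} η(t) + (τ−1)·(L·R + L²·∑_{t=1}^{T} η(t)) + ∑_{t=1}^{T−τ+1} ( f(x(t)) − F(x(t); ξ_{t+τ−1}) + F(x*; ξ_{t+τ−1}) − f(x*) ). -/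
open Finset

set_option maxHeartbeats 2000000 in
/-- Deterministic master inequality for Ergodic Mirror Descent
(inequality (bound-to-concentrate) in the paper). -/
theorem emd_master_inequality
    {E : Type*} [NormedAddCommGroup E] [NormedSpace ℝ E]
    (X : Set E) (hXne : X.Nonempty) (hXconv : Convex ℝ X)
    (ψ : E → ℝ) (ψ' : E → StrongDual ℝ E)
    (D : E → E → ℝ)
    (hD : ∀ x y : E, D x y = ψ x - ψ y - ψ' y (x - y))
    (R L : ℝ) (hR : 0 < R) (hL : 0 ≤ L)
    (hstrong : ∀ x ∈ X, ∀ y ∈ X, (1 / 2 : ℝ) * ‖x - y‖ ^ 2 ≤ D x y)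
    (hradius : ∀ x ∈ X, ∀ y ∈ X, D x y ≤ (1 / 2 : ℝ) * R ^ 2)
    {S : Type*} (ξ : ℕ → S)
    (F : E → S → ℝ)
    (hFLip : ∀ s : S, ∀ u ∈ X, ∀ v ∈ X, |F u s - F v s| ≤ L * ‖u - v‖)
    (f : E → ℝ)
    (hfLip : ∀ u ∈ X, ∀ v ∈ X, |f u - f v| ≤ L * ‖u - v‖)
    (x : ℕ → E) (hx : ∀ t, x t ∈ X)
    (g : ℕ → StrongDual ℝ E)
    (η : ℕ → ℝ) (hηpos : ∀ t, 0 < η t)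
    (hηmono : ∀ s t : ℕ, s ≤ t → η t ≤ η s)
    (hopt : ∀ t : ℕ, ∀ y ∈ X,
      0 ≤ (η t • g t + ψ' (x (t + 1)) - ψ' (x t)) (y - x (t + 1)))
    (hsub : ∀ t : ℕ, ∀ y ∈ X, F (x t) (ξ t) + g t (y - x t) ≤ F y (ξ t))
    (hgbd : ∀ t : ℕ, ‖g t‖ ≤ L)
    (xstar : E) (hxstar : xstar ∈ X)
    (τ T : ℕ) (hτ1 : 1 ≤ τ) (hτT : τ ≤ T) :
    ∑ t ∈ Finset.Icc 1 T, (f (x t) - f xstar)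
      ≤ R ^ 2 / (2 * η T) + (L ^ 2 / 2) * ∑ t ∈ Finset.Icc 1 T, η t
        + ((τ : ℝ) - 1) * (L * R + L ^ 2 * ∑ t ∈ Finset.Icc 1 T, η t)
        + ∑ t ∈ Finset.Icc 1 (T - τ + 1),
            (f (x t) - F (x t) (ξ (t + τ - 1)) + F xstar (ξ (t + τ - 1)) - f xstar) := by
  -- abbreviation
  set k := τ - 1 with hkdef
  have hτk : τ = k + 1 := by omega
  have hkT : k ≤ T := by omega
  -- basic facts about D
  have hd0 : ∀ t : ℕ, 0 ≤ D xstar (x t) := fun t =>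
    le_trans (by positivity) (hstrong xstar hxstar (x t) (hx t))
  have hdR : ∀ t : ℕ, D xstar (x t) ≤ R ^ 2 / 2 := fun t => by
    have := hradius xstar hxstar (x t) (hx t); linarith
  -- pairing bound
  have hpair : ∀ t : ℕ, ∀ v : E, g t v ≤ L * ‖v‖ := by
    intro t v
    calc g t v ≤ |g t v| := le_abs_self _
      _ = ‖g t v‖ := (Real.norm_eq_abs _).symm
      _ ≤ ‖g t‖ * ‖v‖ := (g t).le_opNorm v
      _ ≤ L * ‖v‖ := by
          apply mul_le_mul_of_nonneg_right (hgbd t) (norm_nonneg _)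
  -- movement bound
  have hmove : ∀ t : ℕ, ‖x (t + 1) - x t‖ ≤ η t * L := by
    intro t
    have h := hopt t (x t) (hx t)
    simp only [ContinuousLinearMap.sub_apply, ContinuousLinearMap.add_apply,
      ContinuousLinearMap.coe_smul', Pi.smul_apply, smul_eq_mul] at h
    have e1 : (ψ' (x (t + 1))) (x t - x (t + 1)) = -(ψ' (x (t + 1))) (x (t + 1) - x t) := by
      rw [← map_neg]; congr 1; abel
    have e2 : (ψ' (x t)) (x (t + 1) - x t) = -(ψ' (x t)) (x t - x (t + 1)) := by
      rw [← map_neg]; congr 1; abel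
    have sc1 : (1 / 2 : ℝ) * ‖x t - x (t + 1)‖ ^ 2 ≤ D (x t) (x (t + 1)) :=
      hstrong _ (hx _) _ (hx _)
    have sc2 : (1 / 2 : ℝ) * ‖x (t + 1) - x t‖ ^ 2 ≤ D (x (t + 1)) (x t) :=
      hstrong _ (hx _) _ (hx _)
    have hDD : D (x t) (x (t + 1)) + D (x (t + 1)) (x t)
        = (ψ' (x t)) (x t - x (t + 1)) - (ψ' (x (t + 1))) (x t - x (t + 1)) := by
      rw [hD, hD]; linarith [e1, e2]
    have hg : g t (x t - x (t + 1)) ≤ L * ‖x t - x (t + 1)‖ := hpair t _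
    have hnr : ‖x t - x (t + 1)‖ = ‖x (t + 1) - x t‖ := norm_sub_rev _ _
    have hηt := hηpos t
    rw [hnr] at hg sc1
    have hmul : η t * (g t (x t - x (t + 1))) ≤ η t * (L * ‖x (t + 1) - x t‖) :=
      mul_le_mul_of_nonneg_left hg hηt.le
    -- ‖x(t+1) - x t‖^2 ≤ η t * L * ‖x(t+1) - x t‖
    have key : ‖x (t + 1) - x t‖ ^ 2 ≤ η t * L * ‖x (t + 1) - x t‖ := by
      have h2 : (ψ' (x t)) (x t - x (t + 1)) - (ψ' (x (t + 1))) (x t - x (t + 1))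
          ≤ η t * (g t (x t - x (t + 1))) := by linarith
      nlinarith [hmul, hDD, sc1, sc2]
    rcases eq_or_lt_of_le (norm_nonneg (x (t + 1) - x t)) with h0 | h0
    · rw [← h0]; positivity
    · exact le_of_mul_le_mul_right (by nlinarith [key]) h0
  -- per-step mirror descent bound (multiplied form)
  have hmult : ∀ t : ℕ, η t * (g t (x t - xstar))
      ≤ D xstar (x t) - D xstar (x (t + 1)) + (η t * L) ^ 2 / 2 := by
    intro t
    have h := hopt t xstar hxstar
    simp only [ContinuousLinearMap.sub_apply, ContinuousLinearMap.add_apply,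
      ContinuousLinearMap.coe_smul', Pi.smul_apply, smul_eq_mul] at h
    have e1 : (ψ' (x t)) (xstar - x t)
        = (ψ' (x t)) (xstar - x (t + 1)) + (ψ' (x t)) (x (t + 1) - x t) := by
      rw [← map_add]; congr 1; abel
    have h3pt : (ψ' (x (t + 1))) (xstar - x (t + 1)) - (ψ' (x t)) (xstar - x (t + 1))
        = D xstar (x t) - D xstar (x (t + 1)) - D (x (t + 1)) (x t) := by
      rw [hD, hD, hD]; linarith [e1]
    have hsplit : g t (x t - xstar) = g t (x t - x (t + 1)) - g t (xstar - x (t + 1)) := by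
      rw [← map_sub]; congr 1; abel
    have hg : g t (x t - x (t + 1)) ≤ L * ‖x t - x (t + 1)‖ := hpair t _
    have sc : (1 / 2 : ℝ) * ‖x (t + 1) - x t‖ ^ 2 ≤ D (x (t + 1)) (x t) :=
      hstrong _ (hx _) _ (hx _)
    have hnr : ‖x t - x (t + 1)‖ = ‖x (t + 1) - x t‖ := norm_sub_rev _ _
    have hηt := hηpos t
    rw [hnr] at hg
    have hmul : η t * (g t (x t - x (t + 1))) ≤ η t * (L * ‖x (t + 1) - x t‖) :=
      mul_le_mul_of_nonneg_left hg hηt.le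
    have hsq : 0 ≤ (η t * L - ‖x (t + 1) - x t‖) ^ 2 := sq_nonneg _
    have hsplit' : η t * (g t (x t - xstar))
        = η t * (g t (x t - x (t + 1))) - η t * (g t (xstar - x (t + 1))) := by
      rw [hsplit]; ring
    nlinarith [h, h3pt, hmul, sc, hsq, hsplit']
  -- per-step bound, divided form
  have hstep : ∀ s : ℕ, g s (x s - xstar)
      ≤ (D xstar (x s) - D xstar (x (s + 1))) / η s + (L ^ 2 / 2) * η s := by
    intro s
    have hηs := hηpos s
    have h := hmult s
    rw [div_add' _ _ _ (ne_of_gt hηs), le_div_iff₀ hηs]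
    nlinarith [h]
  -- telescoping
  have htel : ∀ b : ℕ, τ ≤ b →
      ∑ s ∈ Icc τ b, (D xstar (x s) - D xstar (x (s + 1))) / η s
        ≤ (R ^ 2 / 2) / η b - D xstar (x (b + 1)) / η b := by
    intro b hb
    induction b, hb using Nat.le_induction with
    | base =>
        rw [Finset.Icc_self, Finset.sum_singleton, sub_div]
        have := hηpos τ
        gcongr
        exact hdR τ
    | succ b hb ih =>
        rw [Finset.sum_Icc_succ_top (by omega)]
        have hp := hηpos (b + 1)
        have hq := hηpos b
        have hpq : η (b + 1) ≤ η b := hηmono b (b + 1) (by omega)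
        have hinv : 1 / η b ≤ 1 / η (b + 1) := one_div_le_one_div_of_le hp hpq
        have key : D xstar (x (b + 1)) * (1 / η (b + 1) - 1 / η b)
            ≤ (R ^ 2 / 2) * (1 / η (b + 1) - 1 / η b) :=
          mul_le_mul_of_nonneg_right (hdR _) (by linarith)
        rw [mul_sub, mul_sub, mul_one_div, mul_one_div, mul_one_div, mul_one_div] at key
        rw [sub_div]
        linarith [ih]
  -- summed mirror descent bound over Icc τ T
  have hηsum_sub : ∑ s ∈ Icc τ T, η s ≤ ∑ s ∈ Icc 1 T, η s :=
    Finset.sum_le_sum_of_subset_of_nonneg (Finset.Icc_subset_Icc_left hτ1)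
      (fun i _ _ => (hηpos i).le)
  have hsum1 : ∑ s ∈ Icc τ T, g s (x s - xstar)
      ≤ (R ^ 2 / 2) / η T + (L ^ 2 / 2) * ∑ s ∈ Icc 1 T, η s := by
    calc ∑ s ∈ Icc τ T, g s (x s - xstar)
        ≤ ∑ s ∈ Icc τ T, ((D xstar (x s) - D xstar (x (s + 1))) / η s + (L ^ 2 / 2) * η s) :=
          Finset.sum_le_sum (fun s _ => hstep s)
      _ = (∑ s ∈ Icc τ T, (D xstar (x s) - D xstar (x (s + 1))) / η s)
            + (L ^ 2 / 2) * ∑ s ∈ Icc τ T, η s := by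
          rw [Finset.sum_add_distrib, Finset.mul_sum]
      _ ≤ ((R ^ 2 / 2) / η T - D xstar (x (T + 1)) / η T)
            + (L ^ 2 / 2) * ∑ s ∈ Icc 1 T, η s := by
          have h1 := htel T hτT
          have h2 : (L ^ 2 / 2) * ∑ s ∈ Icc τ T, η s ≤ (L ^ 2 / 2) * ∑ s ∈ Icc 1 T, η s :=
            mul_le_mul_of_nonneg_left hηsum_sub (by positivity)
          linarith
      _ ≤ (R ^ 2 / 2) / η T + (L ^ 2 / 2) * ∑ s ∈ Icc 1 T, η s := by
          have : 0 ≤ D xstar (x (T + 1)) / η T := div_nonneg (hd0 _) (hηpos T).le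
          linarith
  -- multi-step movement
  have hmove2 : ∀ j t : ℕ, ‖x t - x (t + j)‖ ≤ (j : ℝ) * (η t * L) := by
    intro j
    induction j with
    | zero => intro t; simp
    | succ j ih =>
        intro t
        have hsplit : x t - x (t + (j + 1)) = (x t - x (t + j)) + (x (t + j) - x (t + j + 1)) := by
          abel
        have hη' : η (t + j) ≤ η t := hηmono t (t + j) (Nat.le_add_right _ _)
        calc ‖x t - x (t + (j + 1))‖
            ≤ ‖x t - x (t + j)‖ + ‖x (t + j) - x (t + j + 1)‖ := by
              rw [hsplit]; exact norm_add_le _ _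
          _ ≤ (j : ℝ) * (η t * L) + η (t + j) * L := by
              have := hmove (t + j)
              have hnr : ‖x (t + j) - x (t + j + 1)‖ = ‖x (t + j + 1) - x (t + j)‖ :=
                norm_sub_rev _ _
              exact add_le_add (ih t) (by rw [hnr]; exact this)
          _ ≤ ((j : ℝ) + 1) * (η t * L) := by nlinarith [hηpos t, hL]
          _ = ((j + 1 : ℕ) : ℝ) * (η t * L) := by push_cast; ring
  -- diameter bound
  have hdiam : ∀ t : ℕ, ‖x t - xstar‖ ≤ R := by
    intro t
    have h1 : (1 / 2 : ℝ) * ‖x t - xstar‖ ^ 2 ≤ D (x t) xstar := hstrong _ (hx t) _ hxstar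
    have h2 : D (x t) xstar ≤ (1 / 2 : ℝ) * R ^ 2 := hradius _ (hx t) _ hxstar
    nlinarith [norm_nonneg (x t - xstar)]
  -- tail sum
  have htail : ∑ s ∈ Ioc (T - k) T, (f (x s) - f xstar) ≤ (k : ℝ) * (L * R) := by
    have hbd : ∀ s ∈ Ioc (T - k) T, f (x s) - f xstar ≤ L * R := by
      intro s _
      calc f (x s) - f xstar ≤ |f (x s) - f xstar| := le_abs_self _
        _ ≤ L * ‖x s - xstar‖ := hfLip _ (hx s) _ hxstar
        _ ≤ L * R := mul_le_mul_of_nonneg_left (hdiam s) hL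
    calc ∑ s ∈ Ioc (T - k) T, (f (x s) - f xstar)
        ≤ #(Ioc (T - k) T) • (L * R) := Finset.sum_le_card_nsmul _ _ _ hbd
      _ = (k : ℝ) * (L * R) := by
          rw [Nat.card_Ioc, nsmul_eq_mul]
          congr 1
          have : T - (T - k) = k := by omega
          rw [this]
  -- per-term decomposition on the head
  have hterm : ∀ t : ℕ, f (x t) - f xstar
      ≤ (f (x t) - F (x t) (ξ (t + k)) + F xstar (ξ (t + k)) - f xstar)
        + (k : ℝ) * L ^ 2 * η t + g (t + k) (x (t + k) - xstar) := by
    intro t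
    have h1 : F (x t) (ξ (t + k)) - F (x (t + k)) (ξ (t + k)) ≤ L * ‖x t - x (t + k)‖ :=
      le_trans (le_abs_self _) (hFLip _ _ (hx _) _ (hx _))
    have h2 : F (x (t + k)) (ξ (t + k)) - F xstar (ξ (t + k)) ≤ g (t + k) (x (t + k) - xstar) := by
      have hs := hsub (t + k) xstar hxstar
      have e : g (t + k) (xstar - x (t + k)) = -(g (t + k) (x (t + k) - xstar)) := by
        rw [← map_neg]; congr 1; abel
      linarith [hs, e]
    have h3 : L * ‖x t - x (t + k)‖ ≤ L * ((k : ℝ) * (η t * L)) :=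
      mul_le_mul_of_nonneg_left (hmove2 k t) hL
    nlinarith [h1, h2, h3]
  -- reindexing
  have hreindex : ∀ h : ℕ → ℝ, ∑ t ∈ Icc 1 (T - k), h (t + k) = ∑ s ∈ Icc τ T, h s := by
    intro h
    rw [show Finset.Icc τ T = Finset.Icc (1 + k) ((T - k) + k) by congr 1 <;> omega,
      ← Finset.map_add_right_Icc, Finset.sum_map]
    rfl
  -- head sum
  have hηsum_sub2 : ∑ t ∈ Icc 1 (T - k), η t ≤ ∑ t ∈ Icc 1 T, η t :=
    Finset.sum_le_sum_of_subset_of_nonneg (Finset.Icc_subset_Icc_right (by omega))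
      (fun i _ _ => (hηpos i).le)
  have hhead : ∑ t ∈ Icc 1 (T - k), (f (x t) - f xstar)
      ≤ (∑ t ∈ Icc 1 (T - k),
            (f (x t) - F (x t) (ξ (t + k)) + F xstar (ξ (t + k)) - f xstar))
        + (k : ℝ) * L ^ 2 * ∑ t ∈ Icc 1 T, η t
        + ((R ^ 2 / 2) / η T + (L ^ 2 / 2) * ∑ s ∈ Icc 1 T, η s) := by
    calc ∑ t ∈ Icc 1 (T - k), (f (x t) - f xstar)
        ≤ ∑ t ∈ Icc 1 (T - k),
            ((f (x t) - F (x t) (ξ (t + k)) + F xstar (ξ (t + k)) - f xstar)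
              + (k : ℝ) * L ^ 2 * η t + g (t + k) (x (t + k) - xstar)) :=
          Finset.sum_le_sum (fun t _ => hterm t)
      _ = (∑ t ∈ Icc 1 (T - k),
              (f (x t) - F (x t) (ξ (t + k)) + F xstar (ξ (t + k)) - f xstar))
            + (k : ℝ) * L ^ 2 * (∑ t ∈ Icc 1 (T - k), η t)
            + ∑ t ∈ Icc 1 (T - k), g (t + k) (x (t + k) - xstar) := by
          rw [Finset.sum_add_distrib, Finset.sum_add_distrib, Finset.mul_sum]
      _ ≤ _ := by
          have h1 : (k : ℝ) * L ^ 2 * (∑ t ∈ Icc 1 (T - k), η t)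
              ≤ (k : ℝ) * L ^ 2 * ∑ t ∈ Icc 1 T, η t :=
            mul_le_mul_of_nonneg_left hηsum_sub2 (by positivity)
          have h2 : ∑ t ∈ Icc 1 (T - k), g (t + k) (x (t + k) - xstar)
              ≤ (R ^ 2 / 2) / η T + (L ^ 2 / 2) * ∑ s ∈ Icc 1 T, η s := by
            rw [hreindex (fun s => g s (x s - xstar))]
            exact hsum1
          linarith
  -- splitting the full sum
  have hsplitsum : ∑ t ∈ Icc 1 T, (f (x t) - f xstar)
      = ∑ t ∈ Icc 1 (T - k), (f (x t) - f xstar) + ∑ s ∈ Ioc (T - k) T, (f (x s) - f xstar) := by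
    have e1 : Finset.Icc 1 T = Finset.Ioc 0 T := by rw [← Finset.Icc_add_one_left_eq_Ioc]; rfl
    have e2 : Finset.Icc 1 (T - k) = Finset.Ioc 0 (T - k) := by rw [← Finset.Icc_add_one_left_eq_Ioc]; rfl
    rw [e1, e2, Finset.sum_Ioc_consecutive _ (Nat.zero_le _) (by omega)]
  -- rewriting the statement's last sum
  have hSeq : ∑ t ∈ Finset.Icc 1 (T - τ + 1),
        (f (x t) - F (x t) (ξ (t + τ - 1)) + F xstar (ξ (t + τ - 1)) - f xstar)
      = ∑ t ∈ Icc 1 (T - k),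
        (f (x t) - F (x t) (ξ (t + k)) + F xstar (ξ (t + k)) - f xstar) := by
    apply Finset.sum_congr (by congr 1; omega)
    intro t _
    have : t + τ - 1 = t + k := by omega
    rw [this]
  have hcast : (τ : ℝ) - 1 = (k : ℝ) := by rw [hτk]; push_cast; ring
  have hdiveq : R ^ 2 / (2 * η T) = (R ^ 2 / 2) / η T := by rw [div_div]
  rw [hSeq, hsplitsum, hdiveq, hcast]
  nlinarith [hhead, htail]
end

section
/- Interleaved-martingale concentration (Proposition 1 of the paper in abstract form). Let (Ω, 𝔉, P) be a probability space with filtration (𝔉_t)_{t∈ℕ}, let L, R > 0, δ ∈ (0,1), and let τ, T be natural numbers with 1 ≤ τ and 2τ ≤ T. Let (Z_t)_{t∈ℕ} be integrable real random variables with Z_t 𝔉_t-measurable, and let (a_t) be real constants such that for every t with τ ≤ t ≤ T: |Z_t − E[Z_t | 𝔉_{t−τ}]| ≤ 2·L·R almost surely and |E[Z_t | 𝔉_{t−τ}]| ≤ a_t almost surely. Then with probability at least 1 − δ: ∑_{t=τ}^{T} Z_t ≤ 4·L·R·√(T·τ·log(τ/δ)) + ∑_{t=τ}^{T} a_t. 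-/
open MeasureTheory Finset Real

lemma exp_le_cosh_aux {c : ℝ} (hc : 0 < c) {x : ℝ} (hx : |x| ≤ c) (l : ℝ) :
    Real.exp (l * x) ≤ Real.cosh (l * c) + (x / c) * Real.sinh (l * c) := by
  obtain ⟨h1, h2⟩ := abs_le.mp hx
  have h2c : (0:ℝ) < 2 * c := by linarith
  have hθ0 : 0 ≤ (c - x) / (2 * c) := div_nonneg (by linarith) h2c.le
  have hθ1 : 0 ≤ (c + x) / (2 * c) := div_nonneg (by linarith) h2c.le
  have hsum : (c - x) / (2 * c) + (c + x) / (2 * c) = 1 := by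
    rw [← add_div, div_eq_one_iff_eq h2c.ne']; ring
  have key := convexOn_exp.2 (Set.mem_univ (l * (-c))) (Set.mem_univ (l * c)) hθ0 hθ1 hsum
  have hcomb : ((c - x) / (2 * c)) • (l * (-c)) + ((c + x) / (2 * c)) • (l * c) = l * x := by
    simp only [smul_eq_mul]
    field_simp
    ring
  rw [hcomb] at key
  refine key.trans_eq ?_
  simp only [smul_eq_mul, Real.cosh_eq, Real.sinh_eq, mul_neg, Real.exp_neg]
  have he := (Real.exp_pos (l * c)).ne'
  field_simp
  ring

lemma integrable_of_abs_le {Ω : Type*} {m0 : MeasurableSpace Ω} {μ : Measure Ω}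
    [IsFiniteMeasure μ] {f : Ω → ℝ} {C : ℝ}
    (hf : AEStronglyMeasurable f μ) (h : ∀ᵐ ω ∂μ, |f ω| ≤ C) : Integrable f μ :=
  ⟨hf, HasFiniteIntegral.of_bounded (C := C) (by simpa [Real.norm_eq_abs] using h)⟩

lemma integrable_exp_mul {Ω : Type*} {m0 : MeasurableSpace Ω} {μ : Measure Ω}
    [IsFiniteMeasure μ] {X : Ω → ℝ} {c : ℝ}
    (hX : AEStronglyMeasurable X μ) (hbd : ∀ᵐ ω ∂μ, |X ω| ≤ c) (l : ℝ) :
    Integrable (fun ω => Real.exp (l * X ω)) μ := by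
  refine integrable_of_abs_le (C := Real.exp (|l| * c))
    (Real.continuous_exp.comp_aestronglyMeasurable (hX.const_mul l)) ?_
  filter_upwards [hbd] with ω hω
  rw [abs_of_pos (Real.exp_pos _)]
  exact Real.exp_le_exp.2 ((le_abs_self _).trans (by
    rw [abs_mul]; exact mul_le_mul_of_nonneg_left hω (abs_nonneg l)))

lemma condExp_exp_le {Ω : Type*} {m0 : MeasurableSpace Ω} {μ : Measure Ω}
    [IsProbabilityMeasure μ] {m : MeasurableSpace Ω} (hm : m ≤ m0)
    {X : Ω → ℝ} {c : ℝ} (hc : 0 < c)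
    (hint : Integrable X μ) (hbd : ∀ᵐ ω ∂μ, |X ω| ≤ c)
    (h0 : μ[X|m] =ᵐ[μ] 0) (l : ℝ) :
    μ[fun ω => Real.exp (l * X ω)|m] ≤ᵐ[μ] fun _ => Real.exp (l ^ 2 * c ^ 2 / 2) := by
  set s := Real.sinh (l * c) / c with hs
  have hexpint : Integrable (fun ω => Real.exp (l * X ω)) μ :=
    integrable_exp_mul hint.1 hbd l
  have hgint : Integrable (fun ω => Real.cosh (l * c) + s * X ω) μ :=
    (integrable_const _).add (hint.const_mul s)
  have hptw : ∀ᵐ ω ∂μ, Real.exp (l * X ω) ≤ Real.cosh (l * c) + s * X ω := by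
    filter_upwards [hbd] with ω hω
    have := exp_le_cosh_aux hc hω l
    calc Real.exp (l * X ω) ≤ Real.cosh (l * c) + (X ω / c) * Real.sinh (l * c) := this
    _ = Real.cosh (l * c) + s * X ω := by rw [hs]; ring
  have h1 : μ[fun ω => Real.exp (l * X ω)|m] ≤ᵐ[μ]
      μ[fun ω => Real.cosh (l * c) + s * X ω|m] := condExp_mono hexpint hgint hptw
  have h2 : μ[fun ω => Real.cosh (l * c) + s * X ω|m] =ᵐ[μ]
      (fun _ => Real.cosh (l * c)) := by
    have ha : (fun ω => Real.cosh (l * c) + s * X ω)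
        = (fun _ => Real.cosh (l * c)) + (s • X) := by
      funext ω; simp [smul_eq_mul]
    rw [ha]
    calc μ[(fun _ => Real.cosh (l * c)) + (s • X)|m]
        =ᵐ[μ] μ[fun _ => Real.cosh (l * c)|m] + μ[s • X|m] :=
          condExp_add (integrable_const _) (hint.smul s) m
      _ =ᵐ[μ] (fun _ => Real.cosh (l * c)) + s • (0 : Ω → ℝ) := by
          filter_upwards [condExp_smul s X (m := m), h0,
            (condExp_const hm (Real.cosh (l * c)) (μ := μ)).symm ▸
              (ae_eq_refl (μ := μ) (μ[fun _ => Real.cosh (l*c)|m]))] with ω hω h0ω _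
          simp only [Pi.add_apply, Pi.smul_apply, smul_eq_mul]
          rw [condExp_const hm, hω]
          simp only [Pi.smul_apply, smul_eq_mul, h0ω, Pi.zero_apply]
      _ = (fun _ => Real.cosh (l * c)) := by funext ω; simp
  have h3 : Real.cosh (l * c) ≤ Real.exp (l ^ 2 * c ^ 2 / 2) := by
    have := Real.cosh_le_exp_half_sq (l * c)
    rwa [mul_pow] at this
  filter_upwards [h1, h2] with ω hω1 hω2
  exact hω1.trans (hω2.le.trans h3)

lemma azuma_mgf {Ω : Type*} {m0 : MeasurableSpace Ω} (μ : Measure Ω)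
    [IsProbabilityMeasure μ]
    (𝒢 : ℕ → MeasurableSpace Ω) (hmono : Monotone 𝒢) (hle : ∀ i, 𝒢 i ≤ m0)
    (X : ℕ → Ω → ℝ) (c : ℝ) (hc : 0 < c)
    (hmeas : ∀ k, StronglyMeasurable[𝒢 (k + 1)] (X k))
    (hint : ∀ k, Integrable (X k) μ)
    (hbd : ∀ k, ∀ᵐ ω ∂μ, |X k ω| ≤ c)
    (hzero : ∀ k, μ[X k|𝒢 k] =ᵐ[μ] 0) (l : ℝ) :
    ∀ n, ∫ ω, Real.exp (l * ∑ k ∈ range n, X k ω) ∂μ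
      ≤ Real.exp (n * (l ^ 2 * c ^ 2 / 2)) := by
  intro n
  induction n with
  | zero => simp
  | succ n ih =>
    set S : Ω → ℝ := fun ω => ∑ k ∈ range n, X k ω with hS
    have hSmeas : StronglyMeasurable[𝒢 n] S :=
      Finset.stronglyMeasurable_fun_sum (range n) fun k hk =>
        (hmeas k).mono (hmono (Nat.succ_le_of_lt (mem_range.mp hk)))
    have hSbd : ∀ᵐ ω ∂μ, |S ω| ≤ n * c := by
      have := ae_all_iff.2 hbd
      filter_upwards [this] with ω hω
      calc |S ω| ≤ ∑ k ∈ range n, |X k ω| := Finset.abs_sum_le_sum_abs _ _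
        _ ≤ ∑ k ∈ range n, c := Finset.sum_le_sum fun k _ => hω k
        _ = n * c := by simp [mul_comm]
    set f : Ω → ℝ := fun ω => Real.exp (l * S ω) with hf
    have hfmeasm : StronglyMeasurable[𝒢 n] f :=
      Real.continuous_exp.comp_stronglyMeasurable (hSmeas.const_mul l)
    have hfmeas : AEStronglyMeasurable f μ :=
      (hfmeasm.mono (hle n)).aestronglyMeasurable
    have hfint : Integrable f μ := integrable_exp_mul ((hSmeas.mono (hle n)).aestronglyMeasurable) hSbd l
    set e : Ω → ℝ := fun ω => Real.exp (l * X n ω) with he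
    have heint : Integrable e μ := integrable_exp_mul (hint n).1 (hbd n) l
    have hfe : Integrable (f * e) μ := by
      refine integrable_of_abs_le (C := Real.exp (|l| * (n * c)) * Real.exp (|l| * c))
        (hfmeas.mul heint.1) ?_
      filter_upwards [hSbd, hbd n] with ω h1 h2
      have e1 : f ω ≤ Real.exp (|l| * (n * c)) :=
        Real.exp_le_exp.2 ((le_abs_self _).trans (by
          rw [abs_mul]; exact mul_le_mul_of_nonneg_left h1 (abs_nonneg l)))
      have e2 : e ω ≤ Real.exp (|l| * c) :=
        Real.exp_le_exp.2 ((le_abs_self _).trans (by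
          rw [abs_mul]; exact mul_le_mul_of_nonneg_left h2 (abs_nonneg l)))
      rw [Pi.mul_apply, abs_mul, abs_of_pos (Real.exp_pos _), abs_of_pos (Real.exp_pos _)]
      exact mul_le_mul e1 e2 (Real.exp_pos _).le (Real.exp_pos _).le
    have hpull : μ[f * e|𝒢 n] =ᵐ[μ] f * μ[e|𝒢 n] :=
      condExp_mul_of_stronglyMeasurable_left hfmeasm hfe heint
    have hcond : μ[e|𝒢 n] ≤ᵐ[μ] fun _ => Real.exp (l ^ 2 * c ^ 2 / 2) :=
      condExp_exp_le (hle n) hc (hint n) (hbd n) (hzero n) l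
    have hcond0 : 0 ≤ᵐ[μ] μ[e|𝒢 n] :=
      condExp_nonneg (ae_of_all μ fun ω => (Real.exp_pos _).le)
    have hfcint : Integrable (f * μ[e|𝒢 n]) μ := by
      refine integrable_of_abs_le
        (C := Real.exp (|l| * (n * c)) * Real.exp (l ^ 2 * c ^ 2 / 2))
        (hfmeas.mul (stronglyMeasurable_condExp.mono (hle n)).aestronglyMeasurable) ?_
      filter_upwards [hSbd, hcond, hcond0] with ω h1 h2 h3
      rw [Pi.mul_apply, abs_mul, abs_of_pos (Real.exp_pos _), abs_of_nonneg h3]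
      have e1 : f ω ≤ Real.exp (|l| * (n * c)) :=
        Real.exp_le_exp.2 ((le_abs_self _).trans (by
          rw [abs_mul]; exact mul_le_mul_of_nonneg_left h1 (abs_nonneg l)))
      exact mul_le_mul e1 h2 h3 (Real.exp_pos _).le
    have step1 : ∫ ω, Real.exp (l * ∑ k ∈ range (n + 1), X k ω) ∂μ
        = ∫ ω, (f * e) ω ∂μ := by
      refine integral_congr_ae (ae_of_all μ fun ω => ?_)
      show Real.exp (l * ∑ k ∈ range (n + 1), X k ω)
        = Real.exp (l * ∑ k ∈ range n, X k ω) * Real.exp (l * X n ω)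
      rw [Finset.sum_range_succ, mul_add, Real.exp_add]
    have step2 : ∫ ω, (f * e) ω ∂μ = ∫ ω, (f * μ[e|𝒢 n]) ω ∂μ := by
      rw [← integral_condExp (hle n) (μ := μ) (f := f * e)]
      exact integral_congr_ae hpull
    have step3 : ∫ ω, (f * μ[e|𝒢 n]) ω ∂μ
        ≤ ∫ ω, f ω * Real.exp (l ^ 2 * c ^ 2 / 2) ∂μ := by
      refine integral_mono_ae hfcint (hfint.mul_const _) ?_
      filter_upwards [hcond] with ω hω
      exact mul_le_mul_of_nonneg_left hω (Real.exp_pos _).le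
    have step4 : ∫ ω, f ω * Real.exp (l ^ 2 * c ^ 2 / 2) ∂μ
        ≤ Real.exp ((n + 1 : ℕ) * (l ^ 2 * c ^ 2 / 2)) := by
      rw [integral_mul_const]
      calc (∫ ω, f ω ∂μ) * Real.exp (l ^ 2 * c ^ 2 / 2)
          ≤ Real.exp (n * (l ^ 2 * c ^ 2 / 2)) * Real.exp (l ^ 2 * c ^ 2 / 2) :=
            mul_le_mul_of_nonneg_right ih (Real.exp_pos _).le
        _ = Real.exp ((n + 1 : ℕ) * (l ^ 2 * c ^ 2 / 2)) := by
            rw [← Real.exp_add]; push_cast; ring_nf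
    calc ∫ ω, Real.exp (l * ∑ k ∈ range (n + 1), X k ω) ∂μ
        = ∫ ω, (f * μ[e|𝒢 n]) ω ∂μ := by rw [step1, step2]
      _ ≤ _ := step3.trans step4

lemma azuma_tail {Ω : Type*} {m0 : MeasurableSpace Ω} (μ : Measure Ω)
    [IsProbabilityMeasure μ]
    (𝒢 : ℕ → MeasurableSpace Ω) (hmono : Monotone 𝒢) (hle : ∀ i, 𝒢 i ≤ m0)
    (X : ℕ → Ω → ℝ) (c : ℝ) (hc : 0 < c)
    (hmeas : ∀ k, StronglyMeasurable[𝒢 (k + 1)] (X k))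
    (hint : ∀ k, Integrable (X k) μ)
    (hbd : ∀ k, ∀ᵐ ω ∂μ, |X k ω| ≤ c)
    (hzero : ∀ k, μ[X k|𝒢 k] =ᵐ[μ] 0)
    (n : ℕ) (hn : 0 < n) (ε : ℝ) (hε : 0 < ε) :
    μ {ω | ε ≤ ∑ k ∈ range n, X k ω}
      ≤ ENNReal.ofReal (Real.exp (-(ε ^ 2) / (2 * n * c ^ 2))) := by
  set la : ℝ := ε / (n * c ^ 2) with hla
  have hn' : (0:ℝ) < n := Nat.cast_pos.mpr hn
  have hlapos : 0 < la := div_pos hε (by positivity)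
  set S : Ω → ℝ := fun ω => ∑ k ∈ range n, X k ω with hS
  have hSmeas : AEStronglyMeasurable S μ :=
    (Finset.stronglyMeasurable_fun_sum (range n) fun k _ =>
      ((hmeas k).mono (hle (k + 1)))).aestronglyMeasurable
  have hSbd : ∀ᵐ ω ∂μ, |S ω| ≤ n * c := by
    filter_upwards [ae_all_iff.2 hbd] with ω hω
    calc |S ω| ≤ ∑ k ∈ range n, |X k ω| := Finset.abs_sum_le_sum_abs _ _
      _ ≤ ∑ k ∈ range n, c := Finset.sum_le_sum fun k _ => hω k
      _ = n * c := by simp [mul_comm]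
  have h_int : Integrable (fun ω => Real.exp (la * S ω)) μ :=
    integrable_exp_mul hSmeas hSbd la
  have key := ProbabilityTheory.measure_ge_le_exp_mul_mgf (X := S) (μ := μ) ε hlapos.le h_int
  have hmgf : ProbabilityTheory.mgf S μ la ≤ Real.exp (n * (la ^ 2 * c ^ 2 / 2)) :=
    azuma_mgf μ 𝒢 hmono hle X c hc hmeas hint hbd hzero la n
  have key2 : (μ {ω | ε ≤ S ω}).toReal ≤ Real.exp (-(ε ^ 2) / (2 * n * c ^ 2)) := by
    refine key.trans ?_
    calc Real.exp (-la * ε) * ProbabilityTheory.mgf S μ la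
        ≤ Real.exp (-la * ε) * Real.exp (n * (la ^ 2 * c ^ 2 / 2)) :=
          mul_le_mul_of_nonneg_left hmgf (Real.exp_pos _).le
      _ = Real.exp (-la * ε + n * (la ^ 2 * c ^ 2 / 2)) := (Real.exp_add _ _).symm
      _ = Real.exp (-(ε ^ 2) / (2 * n * c ^ 2)) := by
          congr 1
          rw [hla]
          field_simp
          ring
  exact (ENNReal.le_ofReal_iff_toReal_le (measure_ne_top μ _) (Real.exp_pos _).le).2 key2

lemma sum_Icc_interleave {M : Type*} [AddCommMonoid M] (τ T : ℕ) (hτ : 1 ≤ τ) (f : ℕ → M) :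
    ∑ t ∈ Icc τ T, f t
      = ∑ r ∈ range τ, ∑ j ∈ range ((T - r) / τ), f (r + (j + 1) * τ) := by
  have hτ0 : 0 < τ := hτ
  have hback : ∀ t, τ ≤ t → t ≤ T → t % τ + (t / τ - 1 + 1) * τ = t := by
    intro t h1 _
    have hd1 : 1 ≤ t / τ := (Nat.one_le_div_iff hτ0).2 h1
    have := Nat.mod_add_div' t τ
    have he : (t / τ - 1 + 1) * τ = t / τ * τ := by
      congr 1; omega
    rw [he]; omega
  rw [Finset.sum_sigma']
  refine Finset.sum_nbij' (i := fun t => ⟨t % τ, t / τ - 1⟩)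
    (j := fun p => p.1 + (p.2 + 1) * τ) ?_ ?_ ?_ ?_ ?_
  · intro t ht
    simp only [mem_Icc] at ht
    obtain ⟨h1, h2⟩ := ht
    simp only [Finset.mem_sigma, mem_range]
    refine ⟨Nat.mod_lt _ hτ0, ?_⟩
    have hd1 : 1 ≤ t / τ := (Nat.one_le_div_iff hτ0).2 h1
    have hdt : t / τ ≤ (T - t % τ) / τ := by
      apply (Nat.le_div_iff_mul_le hτ0).2
      have hmd := Nat.mod_add_div' t τ
      have hmt : t % τ ≤ t := Nat.mod_le t τ
      have : t / τ * τ = t - t % τ := by omega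
      omega
    omega
  · rintro ⟨r, j⟩ hp
    simp only [Finset.mem_sigma, mem_range] at hp
    obtain ⟨hr, hj⟩ := hp
    have h1 : (j + 1) * τ ≤ T - r := (Nat.le_div_iff_mul_le hτ0).1 hj
    have hτj : 1 * τ ≤ (j + 1) * τ := Nat.mul_le_mul_right τ (by omega)
    simp only [mem_Icc]
    omega
  · intro t ht
    simp only [mem_Icc] at ht
    exact hback t ht.1 ht.2
  · rintro ⟨r, j⟩ hp
    simp only [Finset.mem_sigma, mem_range] at hp
    obtain ⟨hr, hj⟩ := hp
    have hmod : (r + (j + 1) * τ) % τ = r := by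
      rw [Nat.add_mul_mod_self_right, Nat.mod_eq_of_lt hr]
    have hdiv : (r + (j + 1) * τ) / τ = j + 1 := by
      rw [Nat.add_mul_div_right _ _ hτ0, Nat.div_eq_of_lt hr, zero_add]
    simp only [hmod, hdiv, Nat.add_sub_cancel]
  · intro t ht
    simp only [mem_Icc] at ht
    exact congrArg f (hback t ht.1 ht.2).symm

/-- Interleaved-martingale concentration (Proposition 1 of the paper in abstract
form). -/
theorem interleaved_martingale_concentration
    {Ω : Type*} {m0 : MeasurableSpace Ω} (μ : Measure Ω) [IsProbabilityMeasure μ]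
    (ℱ : Filtration ℕ m0)
    (L R : ℝ) (hL : 0 < L) (hR : 0 < R)
    (δ : ℝ) (hδ0 : 0 < δ) (hδ1 : δ < 1)
    (τ T : ℕ) (hτ : 1 ≤ τ) (hτT : 2 * τ ≤ T)
    (Z : ℕ → Ω → ℝ)
    (hZint : ∀ t, Integrable (Z t) μ)
    (hZmeas : ∀ t, StronglyMeasurable[ℱ t] (Z t))
    (a : ℕ → ℝ)
    (hbdd : ∀ t : ℕ, τ ≤ t → t ≤ T →
      ∀ᵐ ω ∂μ, |Z t ω - (μ[Z t | ℱ (t - τ)]) ω| ≤ 2 * L * R)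
    (hcond : ∀ t : ℕ, τ ≤ t → t ≤ T →
      ∀ᵐ ω ∂μ, |(μ[Z t | ℱ (t - τ)]) ω| ≤ a t) :
    ENNReal.ofReal (1 - δ)
      ≤ μ {ω | ∑ t ∈ Finset.Icc τ T, Z t ω
          ≤ 4 * L * R * Real.sqrt ((T : ℝ) * τ * Real.log (τ / δ))
            + ∑ t ∈ Finset.Icc τ T, a t} := by
  have hτ0 : 0 < τ := hτ
  have hτR : (0:ℝ) < τ := Nat.cast_pos.mpr hτ0
  have hTR : (0:ℝ) < T := by
    have : 0 < T := by omega
    exact_mod_cast this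
  set c : ℝ := 2 * L * R with hcdef
  have hc : 0 < c := by positivity
  have hb1 : 1 < (τ:ℝ) / δ := by
    rw [lt_div_iff₀ hδ0]
    have h1 : (1:ℝ) ≤ τ := by exact_mod_cast hτ
    nlinarith
  have hlog : 0 < Real.log ((τ:ℝ) / δ) := Real.log_pos hb1
  set ε : ℝ := 4 * L * R * Real.sqrt ((T : ℝ) * τ * Real.log (τ / δ)) with hεdef
  have hεpos : 0 < ε := by
    have : 0 < Real.sqrt ((T : ℝ) * τ * Real.log (τ / δ)) :=
      Real.sqrt_pos.2 (by positivity)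
    positivity
  -- the martingale differences
  set D : ℕ → Ω → ℝ := fun t ω => Z t ω - (μ[Z t | ℱ (t - τ)]) ω with hDdef
  set X : ℕ → ℕ → Ω → ℝ :=
    fun r j => if r + (j + 1) * τ ≤ T then D (r + (j + 1) * τ) else 0 with hXdef
  set 𝒢 : ℕ → ℕ → MeasurableSpace Ω := fun r j => ℱ (r + j * τ) with hGdef
  set n : ℕ → ℕ := fun r => (T - r) / τ with hndef
  have hτle : ∀ j : ℕ, τ ≤ (j + 1) * τ := fun j =>
    le_trans (by omega) (Nat.mul_le_mul_right τ (by omega : 1 ≤ j + 1))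
  have hGmono : ∀ r, Monotone (𝒢 r) := fun r i j hij =>
    ℱ.mono (Nat.add_le_add_left (Nat.mul_le_mul_right τ hij) r)
  have hGle : ∀ r j, 𝒢 r j ≤ m0 := fun r j => ℱ.le _
  have hDmeas : ∀ t, StronglyMeasurable[ℱ t] (D t) := fun t =>
    (hZmeas t).sub (stronglyMeasurable_condExp.mono (ℱ.mono (Nat.sub_le t τ)))
  have hXmeas : ∀ r j, StronglyMeasurable[𝒢 r (j + 1)] (X r j) := by
    intro r j
    show StronglyMeasurable[ℱ (r + (j + 1) * τ)] (X r j)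
    simp only [hXdef]
    split_ifs with h
    · exact hDmeas _
    · exact stronglyMeasurable_const
  have hXint : ∀ r j, Integrable (X r j) μ := by
    intro r j
    simp only [hXdef]
    split_ifs with h
    · exact (hZint _).sub integrable_condExp
    · exact integrable_zero _ _ _
  have hXbd : ∀ r j, ∀ᵐ ω ∂μ, |X r j ω| ≤ c := by
    intro r j
    simp only [hXdef]
    split_ifs with h
    · exact hbdd _ (le_trans (hτle j) (Nat.le_add_left _ _)) h
    · filter_upwards with ω; simp [hc.le]
  have hXzero : ∀ r j, μ[X r j|𝒢 r j] =ᵐ[μ] 0 := by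
    intro r j
    show μ[X r j|ℱ (r + j * τ)] =ᵐ[μ] 0
    simp only [hXdef]
    split_ifs with h
    · have hsub : r + (j + 1) * τ - τ = r + j * τ := by
        rw [add_one_mul]; omega
      rw [← hsub]
      set t := r + (j + 1) * τ with ht
      have h1 : μ[D t|ℱ (t - τ)] =ᵐ[μ]
          μ[Z t|ℱ (t - τ)] - μ[μ[Z t|ℱ (t - τ)]|ℱ (t - τ)] :=
        condExp_sub (hZint t) integrable_condExp (ℱ (t - τ))
      have h2 : μ[μ[Z t|ℱ (t - τ)]|ℱ (t - τ)] = μ[Z t|ℱ (t - τ)] :=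
        condExp_of_stronglyMeasurable (ℱ.le _) stronglyMeasurable_condExp
          integrable_condExp
      filter_upwards [h1] with ω hω
      simp [hω, h2]
    · rw [condExp_zero]
  -- per-class bad events
  set bad : ℕ → Set Ω := fun r => {ω | ε / τ ≤ ∑ j ∈ range (n r), X r j ω} with hbaddef
  have hbadμ : ∀ r, μ (bad r) ≤ ENNReal.ofReal (δ / τ) := by
    intro r
    rcases Nat.eq_zero_or_pos (n r) with h0 | hpos
    · have : bad r = ∅ := by
        rw [hbaddef]
        ext ω
        simp only [Set.mem_setOf_eq, Set.mem_empty_iff_false, iff_false, not_le, h0]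
        simp only [range_zero, Finset.sum_empty]
        positivity
      rw [this]
      simp
    · have htail := azuma_tail μ (𝒢 r) (hGmono r) (hGle r) (X r) c hc
        (hXmeas r) (hXint r) (hXbd r) (hXzero r) (n r) hpos (ε / τ)
        (div_pos hεpos hτR)
      refine htail.trans (ENNReal.ofReal_le_ofReal ?_)
      -- show exp(-(ε/τ)²/(2 n c²)) ≤ δ/τ
      have hnR : (1:ℝ) ≤ n r := by exact_mod_cast hpos
      have hτn : (τ:ℝ) * n r ≤ T := by
        have h1 : τ * n r ≤ T - r := by
          rw [hndef, mul_comm]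
          exact Nat.div_mul_le_self _ _
        have h2 : τ * n r ≤ T := le_trans h1 (Nat.sub_le _ _)
        exact_mod_cast h2
      have hsq : ε ^ 2 = 16 * L ^ 2 * R ^ 2 * ((T:ℝ) * τ * Real.log (τ / δ)) := by
        rw [hεdef, mul_pow, Real.sq_sqrt (by positivity)]
        ring
      have hquot : (ε / τ) ^ 2 / (2 * (n r : ℝ) * c ^ 2)
          = 2 * T * Real.log ((τ:ℝ) / δ) / (τ * n r) := by
        rw [div_pow, hsq, hcdef]
        have hne1 : (τ:ℝ) ≠ 0 := hτR.ne'
        have hne2 : (n r : ℝ) ≠ 0 := by positivity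
        field_simp
        ring
      have hA : Real.log ((τ:ℝ) / δ) ≤ (ε / τ) ^ 2 / (2 * (n r : ℝ) * c ^ 2) := by
        rw [hquot, le_div_iff₀ (by positivity)]
        nlinarith [hlog.le, hτn]
      calc Real.exp (-(ε / τ) ^ 2 / (2 * (n r) * c ^ 2))
          ≤ Real.exp (-Real.log ((τ:ℝ) / δ)) := by
            rw [Real.exp_le_exp]
            rw [neg_div]
            linarith
        _ = δ / τ := by
            rw [Real.exp_neg, Real.exp_log (by positivity), inv_div]
  -- the union bad event
  set B : Set Ω := ⋃ r ∈ range τ, bad r with hBdef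
  have hBμ : μ B ≤ ENNReal.ofReal δ := by
    calc μ B ≤ ∑ r ∈ range τ, μ (bad r) := measure_biUnion_finset_le _ _
      _ ≤ ∑ r ∈ range τ, ENNReal.ofReal (δ / τ) :=
          Finset.sum_le_sum fun r _ => hbadμ r
      _ = (τ : ENNReal) * ENNReal.ofReal (δ / τ) := by
          rw [Finset.sum_const, card_range, nsmul_eq_mul]
      _ = ENNReal.ofReal δ := by
          rw [← ENNReal.ofReal_natCast τ, ← ENNReal.ofReal_mul (by positivity)]
          congr 1
          field_simp
  -- the good event
  set G : Set Ω := {ω : Ω | ∑ t ∈ Finset.Icc τ T, Z t ω ≤ ε + ∑ t ∈ Finset.Icc τ T, a t} with hGdef2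
  have hGmeas : MeasurableSet G := by
    refine measurableSet_le (Finset.measurable_sum _ fun t _ =>
      ((hZmeas t).mono (ℱ.le t)).measurable) measurable_const
  have hsubset : ∀ᵐ ω ∂μ, ω ∈ Gᶜ → ω ∈ B := by
    have hae : ∀ᵐ ω ∂μ, ∀ t, t ∈ Finset.Icc τ T →
        |(μ[Z t | ℱ (t - τ)]) ω| ≤ a t := by
      rw [ae_all_iff]
      intro t
      by_cases ht : t ∈ Finset.Icc τ T
      · rw [Finset.mem_Icc] at ht
        filter_upwards [hcond t ht.1 ht.2] with ω hω _
        exact hω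
      · filter_upwards with ω hmem
        exact absurd hmem ht
    filter_upwards [hae] with ω hA
    intro hωGc
    by_contra hωB
    apply hωGc
    -- show ω ∈ G
    have hnB : ∀ r ∈ range τ, ∑ j ∈ range (n r), X r j ω < ε / τ := by
      intro r hr
      by_contra hge
      push_neg at hge
      exact hωB (Set.mem_biUnion hr hge)
    have hsplit : ∑ t ∈ Finset.Icc τ T, Z t ω
        = ∑ t ∈ Finset.Icc τ T, D t ω
          + ∑ t ∈ Finset.Icc τ T, (μ[Z t | ℱ (t - τ)]) ω := by
      rw [← Finset.sum_add_distrib]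
      refine Finset.sum_congr rfl fun t _ => ?_
      rw [hDdef]
      ring
    have hDsum : ∑ t ∈ Finset.Icc τ T, D t ω
        = ∑ r ∈ range τ, ∑ j ∈ range (n r), X r j ω := by
      rw [sum_Icc_interleave τ T hτ (fun t => D t ω)]
      refine Finset.sum_congr rfl fun r hr => Finset.sum_congr rfl fun j hj => ?_
      have hjn : j < n r := mem_range.mp hj
      have hle' : r + (j + 1) * τ ≤ T := by
        have h1 : (j + 1) * τ ≤ T - r := (Nat.le_div_iff_mul_le hτ0).1 hjn
        have h2 : τ ≤ (j + 1) * τ := hτle j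
        omega
      simp only [hXdef, hle', if_true]
    have hDlt : ∑ t ∈ Finset.Icc τ T, D t ω ≤ ε := by
      rw [hDsum]
      calc ∑ r ∈ range τ, ∑ j ∈ range (n r), X r j ω
          ≤ ∑ r ∈ range τ, ε / τ :=
            Finset.sum_le_sum fun r hr => (hnB r hr).le
        _ = τ * (ε / τ) := by rw [Finset.sum_const, card_range, nsmul_eq_mul]
        _ = ε := by field_simp
    have hEsum : ∑ t ∈ Finset.Icc τ T, (μ[Z t | ℱ (t - τ)]) ω
        ≤ ∑ t ∈ Finset.Icc τ T, a t :=
      Finset.sum_le_sum fun t ht => (abs_le.1 (hA t ht)).2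
    show ∑ t ∈ Finset.Icc τ T, Z t ω ≤ ε + ∑ t ∈ Finset.Icc τ T, a t
    rw [hsplit]
    exact add_le_add hDlt hEsum
  have hGc : μ Gᶜ ≤ ENNReal.ofReal δ := by
    refine le_trans (measure_mono_ae ?_) hBμ
    exact hsubset
  have h1G : μ Gᶜ = 1 - μ G := by
    rw [measure_compl hGmeas (measure_ne_top μ G), measure_univ]
  have h2G : 1 ≤ ENNReal.ofReal δ + μ G := by
    rw [h1G] at hGc
    exact tsub_le_iff_right.1 hGc
  calc ENNReal.ofReal (1 - δ) = 1 - ENNReal.ofReal δ := by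
        rw [ENNReal.ofReal_sub _ hδ0.le, ENNReal.ofReal_one]
    _ ≤ μ G := by
        rw [tsub_le_iff_right, add_comm]
        exact h2G
end

section
/- Convergence rate under geometric mixing (Corollary 2 of the paper). Assume all hypotheses of the expected-convergence theorem for Ergodic Mirror Descent (mirror-descent setup with strong convexity D(x,y) ≥ (1/2)‖x−y‖² and radius D(x,y) ≤ (1/2)R² on X; adapted EMD iterates with subgradients g(t) of F(·;ξ_t) at x(t), ‖g(t)‖_* ≤ L, and the first-order optimality condition; F(·;s) convex and L-Lipschitz on X for each s; f(x) = ∫ F(x;s) dπ(s)), with stepsizes η(t) = a/√t for some a > 0. Let κ₁ > 0, κ₂ > 0, let ε ∈ (0, κ₂) be such that κ₁·log(κ₂/ε) ≥ 1, and suppose there exists a natural number τ with 1 ≤ τ ≤ κ₁·log(κ₂/ε) for which the mixing hypothesis holds: for every t ≥ 1 and every X-valued 𝔉_t-measurable random vector u, |E[f(u) − f(x*) − F(u; ξ_{t+τ}) + F(x*; ξ_{t+τ}) | 𝔉_t]| ≤ ε·L·R almost surely. Then, with x̂(T) := (1/T)·∑_{t=1}^{T} x(t), for every T ≥ 1: E[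 f(x̂(T)) − f(x*) ] ≤ R²/(2·a·√T) + (2·a·L²/√T)·κ₁·log(κ₂/ε) + ε·L·R + R·L·κ₁·log(κ₂/ε)/T. -/
open MeasureTheory Finset


lemma young_ineq (A n : ℝ) : A * n ≤ A^2/2 + n^2/2 := by nlinarith [sq_nonneg (A - n)]

lemma sqrt_inv_sum_le (T : ℕ) :
    ∑ s ∈ Finset.Icc 1 T, (Real.sqrt s)⁻¹ ≤ 2 * Real.sqrt T := by
  induction T with
  | zero => simp
  | succ n ih =>
    rw [Finset.sum_Icc_succ_top (by omega)]
    have h1 : Real.sqrt n ^ 2 = n := Real.sq_sqrt (by positivity)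
    have h2 : Real.sqrt (n+1) ^ 2 = (n+1 : ℝ) := Real.sq_sqrt (by positivity)
    have h3 : (0:ℝ) < Real.sqrt (n+1) := Real.sqrt_pos.mpr (by positivity)
    have h4 : (0:ℝ) ≤ Real.sqrt n := Real.sqrt_nonneg _
    have key : (Real.sqrt ((n:ℕ)+1 : ℕ))⁻¹ = (Real.sqrt ((n:ℝ)+1))⁻¹ := by
      norm_num
    have : 2 * Real.sqrt n + (Real.sqrt ((n:ℝ)+1))⁻¹ ≤ 2 * Real.sqrt ((n:ℝ)+1) := by
      have h5 : (Real.sqrt ((n:ℝ)+1))⁻¹ * Real.sqrt ((n:ℝ)+1) = 1 := inv_mul_cancel₀ h3.ne'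
      nlinarith [sq_nonneg (Real.sqrt n - Real.sqrt ((n:ℝ)+1)), mul_pos h3 h3]
    calc ∑ s ∈ Finset.Icc 1 n, (Real.sqrt s)⁻¹ + (Real.sqrt ((n:ℕ)+1:ℕ))⁻¹
        ≤ 2 * Real.sqrt n + (Real.sqrt ((n:ℝ)+1))⁻¹ := by
          rw [key]; exact add_le_add_left ih _
      _ ≤ 2 * Real.sqrt ((n:ℝ)+1) := this
      _ = 2 * Real.sqrt ((n:ℕ)+1:ℕ) := by norm_num

lemma abel_aux (d : ℕ → ℝ) (C : ℝ) (hd0 : ∀ s, 0 ≤ d s) (hdC : ∀ s, d s ≤ C) (m : ℕ) :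
    ∀ T : ℕ, ∑ s ∈ Finset.Icc m T, (d s - d (s+1)) * Real.sqrt s + d (T+1) * Real.sqrt T
      ≤ C * Real.sqrt T := by
  intro T
  induction T with
  | zero =>
    rcases Nat.eq_zero_or_pos m with hm | hm
    · subst hm; simp
    · rw [Finset.Icc_eq_empty (by omega)]; simp
  | succ n ih =>
    have hC : 0 ≤ C := le_trans (hd0 0) (hdC 0)
    have hmono : Real.sqrt n ≤ Real.sqrt (n+1:ℕ) := by
      apply Real.sqrt_le_sqrt; push_cast; linarith
    by_cases hm : m ≤ n + 1
    · rw [Finset.sum_Icc_succ_top hm]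
      have h1 : d (n+1) * Real.sqrt (n+1:ℕ) - d (n+1) * Real.sqrt n
          ≤ C * Real.sqrt (n+1:ℕ) - C * Real.sqrt n := by
        have := hdC (n+1); have := hd0 (n+1)
        nlinarith [Real.sqrt_nonneg (n:ℝ)]
      push_cast at *
      nlinarith [ih]
    · rw [Finset.Icc_eq_empty (by omega)]
      simp only [Finset.sum_empty, zero_add]
      have := hdC (n+2)
      have := Real.sqrt_nonneg ((n:ℝ)+1)
      push_cast
      nlinarith [hd0 (n+2)]

lemma abel_sum (d : ℕ → ℝ) (C : ℝ) (hd0 : ∀ s, 0 ≤ d s) (hdC : ∀ s, d s ≤ C) (m T : ℕ) :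
    ∑ s ∈ Finset.Icc m T, (d s - d (s+1)) * Real.sqrt s ≤ C * Real.sqrt T := by
  have := abel_aux d C hd0 hdC m T
  nlinarith [mul_nonneg (hd0 (T+1)) (Real.sqrt_nonneg (T:ℝ))]

set_option maxHeartbeats 4000000 in
/-- Convergence rate under geometric mixing (Corollary 2 of the paper). -/
theorem emd_geometric_mixing_rate
    {E : Type*} [NormedAddCommGroup E] [NormedSpace ℝ E]
    [MeasurableSpace E] [BorelSpace E]
    (X : Set E) (hXne : X.Nonempty) (hXconv : Convex ℝ X)
    (ψ : E → ℝ) (ψ' : E → StrongDual ℝ E)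
    (D : E → E → ℝ)
    (hD : ∀ x y : E, D x y = ψ x - ψ y - ψ' y (x - y))
    (R L : ℝ) (hR : 0 < R) (hL : 0 < L)
    (hstrong : ∀ x ∈ X, ∀ y ∈ X, (1 / 2 : ℝ) * ‖x - y‖ ^ 2 ≤ D x y)
    (hradius : ∀ x ∈ X, ∀ y ∈ X, D x y ≤ (1 / 2 : ℝ) * R ^ 2)
    -- adapted stochastic setup
    {Ω : Type*} {m0 : MeasurableSpace Ω} (μ : Measure Ω) [IsProbabilityMeasure μ]
    (ℱ : Filtration ℕ m0)
    {S : Type*} [MeasurableSpace S]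
    (ξ : ℕ → Ω → S) (hξ : ∀ t, Measurable[ℱ t] (ξ t))
    (F : E → S → ℝ) (hFmeas : Measurable (Function.uncurry F))
    (hFconv : ∀ s : S, ConvexOn ℝ X (fun u => F u s))
    (hFLip : ∀ s : S, ∀ u ∈ X, ∀ v ∈ X, |F u s - F v s| ≤ L * ‖u - v‖)
    (π : Measure S) [IsProbabilityMeasure π]
    (hFint : ∀ u ∈ X, Integrable (fun s => F u s) π)
    (f : E → ℝ) (hf : ∀ u : E, f u = ∫ s, F u s ∂π)
    (xstar : E) (hxstar : xstar ∈ X)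
    -- adapted EMD iterates with stepsizes η(t) = a / √t
    (x : ℕ → Ω → E) (hxX : ∀ t ω, x t ω ∈ X)
    (hxmeas : ∀ t : ℕ, 1 ≤ t → StronglyMeasurable[ℱ (t - 1)] (x t))
    (g : ℕ → Ω → StrongDual ℝ E)
    (hgmeas : ∀ t, StronglyMeasurable[ℱ t] (g t))
    (a : ℝ) (ha : 0 < a)
    (η : ℕ → ℝ) (hη : ∀ t : ℕ, 1 ≤ t → η t = a / Real.sqrt t)
    (hopt : ∀ᵐ ω ∂μ, ∀ t : ℕ, 1 ≤ t → ∀ y ∈ X,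
      0 ≤ (η t • g t ω + ψ' (x (t + 1) ω) - ψ' (x t ω)) (y - x (t + 1) ω))
    (hsub : ∀ᵐ ω ∂μ, ∀ t : ℕ, 1 ≤ t → ∀ y ∈ X,
      F (x t ω) (ξ t ω) + g t ω (y - x t ω) ≤ F y (ξ t ω))
    (hgbd : ∀ᵐ ω ∂μ, ∀ t : ℕ, 1 ≤ t → ‖g t ω‖ ≤ L)
    -- integrability of the relevant random variables
    (hfxint : ∀ t, Integrable (fun ω => f (x t ω)) μ)
    (hFxint : ∀ t s : ℕ, Integrable (fun ω => F (x t ω) (ξ s ω)) μ)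
    (hFstarint : ∀ s : ℕ, Integrable (fun ω => F xstar (ξ s ω)) μ)
    -- geometric mixing hypothesis
    (κ₁ κ₂ : ℝ) (hκ₁ : 0 < κ₁) (hκ₂ : 0 < κ₂)
    (ε : ℝ) (hε0 : 0 < ε) (hεκ₂ : ε < κ₂)
    (hκlog : 1 ≤ κ₁ * Real.log (κ₂ / ε))
    (τ : ℕ) (hτ1 : 1 ≤ τ) (hτbd : (τ : ℝ) ≤ κ₁ * Real.log (κ₂ / ε))
    (hmix : ∀ t : ℕ, 1 ≤ t → ∀ u : Ω → E,
      StronglyMeasurable[ℱ t] u → (∀ ω, u ω ∈ X) →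
      Integrable (fun ω => f (u ω)) μ →
      Integrable (fun ω => F (u ω) (ξ (t + τ) ω)) μ →
      ∀ᵐ ω ∂μ,
        |(μ[(fun ω => f (u ω) - f xstar
            - F (u ω) (ξ (t + τ) ω) + F xstar (ξ (t + τ) ω)) | ℱ t]) ω|
          ≤ ε * L * R)
    (T : ℕ) (hT : 1 ≤ T)
    (hfavgint :
      Integrable (fun ω => f ((T : ℝ)⁻¹ • ∑ t ∈ Finset.Icc 1 T, x t ω)) μ) :
    ∫ ω, (f ((T : ℝ)⁻¹ • ∑ t ∈ Finset.Icc 1 T, x t ω) - f xstar) ∂μ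
      ≤ R ^ 2 / (2 * a * Real.sqrt T)
        + (2 * a * L ^ 2 / Real.sqrt T) * (κ₁ * Real.log (κ₂ / ε))
        + ε * L * R
        + R * L * κ₁ * Real.log (κ₂ / ε) / T := by
  -- deterministic preliminaries
  have hsqT : (0:ℝ) < Real.sqrt T := Real.sqrt_pos.mpr (by positivity)
  have hT0 : (0:ℝ) < (T:ℝ) := by positivity
  have hD0 : ∀ p ∈ X, ∀ q ∈ X, 0 ≤ D p q := fun p hp q hq =>
    le_trans (by positivity) (hstrong p hp q hq)
  have hDR : ∀ p ∈ X, ∀ q ∈ X, D p q ≤ R ^ 2 / 2 := fun p hp q hq => by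
    have := hradius p hp q hq; linarith
  have hdiam : ∀ p ∈ X, ∀ q ∈ X, ‖p - q‖ ≤ R := by
    intro p hp q hq
    have h1 := hstrong p hp q hq
    have h2 := hradius p hp q hq
    nlinarith [norm_nonneg (p - q)]
  have hfdiff : ∀ p ∈ X, ∀ q ∈ X, f p - f q ≤ L * ‖p - q‖ := by
    intro p hp q hq
    rw [hf p, hf q, ← integral_sub (hFint p hp) (hFint q hq)]
    calc ∫ s, (F p s - F q s) ∂π ≤ ∫ _, L * ‖p - q‖ ∂π := by
          apply integral_mono ((hFint p hp).sub (hFint q hq)) (integrable_const _)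
          intro s
          exact le_trans (le_abs_self _) (hFLip s p hp q hq)
      _ = L * ‖p - q‖ := by simp
  have hfconv : ConvexOn ℝ X f := by
    refine ⟨hXconv, fun u hu v hv α β hα hβ hαβ => ?_⟩
    have hmem : α • u + β • v ∈ X := hXconv hu hv hα hβ hαβ
    rw [hf (α • u + β • v), hf u, hf v]
    calc ∫ s, F (α • u + β • v) s ∂π ≤ ∫ s, (α * F u s + β * F v s) ∂π := by
          apply integral_mono (hFint _ hmem)
            (((hFint u hu).const_mul α).add ((hFint v hv).const_mul β))
          intro s
          simpa [smul_eq_mul] using (hFconv s).2 hu hv hα hβ hαβ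
      _ = α * ∫ s, F u s ∂π + β * ∫ s, F v s ∂π := by
          rw [integral_add (((hFint u hu)).const_mul α) ((hFint v hv).const_mul β),
            integral_const_mul, integral_const_mul]
      _ = α • (∫ s, F u s ∂π) + β • (∫ s, F v s ∂π) := by simp [smul_eq_mul]
  -- three point identity
  have htp : ∀ y u v : E, ψ' v (y - v) - ψ' u (y - v) = D y u - D y v - D v u := by
    intro y u v
    simp only [hD, map_sub]
    ring
  -- pointwise one-step analysis
  have hstep : ∀ᵐ ω ∂μ, ∀ s : ℕ, 1 ≤ s →
      ‖x (s + 1) ω - x s ω‖ ≤ a / Real.sqrt s * L ∧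
      F (x s ω) (ξ s ω) - F xstar (ξ s ω) ≤
        (D xstar (x s ω) - D xstar (x (s + 1) ω)) * Real.sqrt s / a
          + a / Real.sqrt s * L ^ 2 / 2 := by
    filter_upwards [hopt, hsub, hgbd] with ω hoptω hsubω hgbdω
    intro s hs
    have hss : (0:ℝ) < Real.sqrt s := Real.sqrt_pos.mpr (by positivity)
    set u := x s ω with hu
    set v := x (s + 1) ω with hv
    set G := g s ω with hG
    have he : η s = a / Real.sqrt s := hη s hs
    have he0 : 0 < η s := by rw [he]; positivity
    -- bound on G applied to differences
    have hGnorm : ‖G‖ ≤ L := hgbdω s hs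
    have hGdiff : ∀ p q : E, G p - G q ≤ L * ‖p - q‖ := by
      intro p q
      calc G p - G q = G (p - q) := (map_sub G p q).symm
        _ ≤ ‖G (p - q)‖ := le_abs_self _
        _ ≤ ‖G‖ * ‖p - q‖ := G.le_opNorm _
        _ ≤ L * ‖p - q‖ := by
            exact mul_le_mul_of_nonneg_right hGnorm (norm_nonneg _)
    -- optimality applied at u and xstar
    have hopt_u := hoptω s hs u (hxX s ω)
    have hopt_star := hoptω s hs xstar hxstar
    simp only [ContinuousLinearMap.add_apply, ContinuousLinearMap.sub_apply,
      ContinuousLinearMap.smul_apply, smul_eq_mul] at hopt_u hopt_star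
    have htpu := htp u u v
    have htps := htp xstar u v
    have hDuu : D u u = 0 := by simp [hD]
    -- step size bound
    have hDsum : D u v + D v u ≤ η s * (G u - G v) := by
      rw [map_sub G u v] at hopt_u
      linarith [hopt_u, htpu, hDuu]
    have hnn : ‖u - v‖ ^ 2 ≤ D u v + D v u := by
      have h1 := hstrong u (hxX s ω) v (hxX (s+1) ω)
      have h2 := hstrong v (hxX (s+1) ω) u (hxX s ω)
      rw [norm_sub_rev] at h2
      linarith
    have hchain : ‖u - v‖ ^ 2 ≤ η s * (L * ‖u - v‖) :=
      le_trans hnn (le_trans hDsum (mul_le_mul_of_nonneg_left (hGdiff u v) he0.le))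
    have hstep1 : ‖v - u‖ ≤ η s * L := by
      rw [norm_sub_rev]
      rcases eq_or_lt_of_le (norm_nonneg (u - v)) with h0 | h0
      · rw [← h0]; positivity
      · have h5 : ‖u - v‖ * ‖u - v‖ ≤ (η s * L) * ‖u - v‖ := by nlinarith [hchain]
        exact le_of_mul_le_mul_right h5 h0
    refine ⟨by rw [← he]; exact hstep1, ?_⟩
    -- regret per-step bound
    have hkey : η s * (G v - G xstar) ≤ D xstar u - D xstar v - D v u := by
      rw [map_sub G xstar v] at hopt_star
      have h9 : η s * (G v - G xstar) = -(η s * (G xstar - G v)) := by ring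
      linarith [hopt_star, htps]
    have hyoung : η s * (G u - G v) ≤ (η s)^2 * L^2 / 2 + D v u := by
      have h1 := hGdiff u v
      have h2 : (1/2 : ℝ) * ‖v - u‖^2 ≤ D v u := hstrong v (hxX (s+1) ω) u (hxX s ω)
      rw [norm_sub_rev] at h2
      have h3 : η s * (G u - G v) ≤ η s * (L * ‖u - v‖) :=
        mul_le_mul_of_nonneg_left h1 he0.le
      have h4 : (η s * L) * ‖u - v‖ ≤ (η s * L)^2/2 + ‖u - v‖^2/2 := young_ineq _ _
      have h5 : η s * (L * ‖u - v‖) = (η s * L) * ‖u - v‖ := by ring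
      have h6 : (η s * L)^2/2 = (η s)^2 * L^2/2 := by ring
      linarith
    have hsub' := hsubω s hs xstar hxstar
    have hFG : F u (ξ s ω) - F xstar (ξ s ω) ≤ G u - G xstar := by
      have h7 : G (xstar - u) = G xstar - G u := map_sub G xstar u
      linarith [hsub']
    have hmain : η s * (F u (ξ s ω) - F xstar (ξ s ω)) ≤
        (η s)^2 * L^2/2 + D xstar u - D xstar v := by
      have h4 := mul_le_mul_of_nonneg_left hFG he0.le
      have h8 : η s * (G u - G xstar) = η s * (G u - G v) + η s * (G v - G xstar) := by
        ring
      linarith [hyoung, hkey]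
    -- divide by η s
    have hinv : (η s)⁻¹ = Real.sqrt s / a := by
      rw [he]; field_simp
    calc F u (ξ s ω) - F xstar (ξ s ω)
        = (η s)⁻¹ * (η s * (F u (ξ s ω) - F xstar (ξ s ω))) := by
          rw [← mul_assoc, inv_mul_cancel₀ he0.ne', one_mul]
      _ ≤ (η s)⁻¹ * ((η s)^2 * L^2/2 + D xstar u - D xstar v) := by
          apply mul_le_mul_of_nonneg_left hmain (by positivity)
      _ = (D xstar u - D xstar v) * (η s)⁻¹ + (η s)⁻¹ * (η s)^2 * L^2/2 := by
          ring
      _ = (D xstar u - D xstar v) * Real.sqrt s / a + a / Real.sqrt s * L ^ 2 / 2 := by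
          rw [hinv, he]
          have hss2 : Real.sqrt s * Real.sqrt s = (s:ℝ) := Real.mul_self_sqrt (by positivity)
          field_simp
  have hτR : (1:ℝ) ≤ (τ:ℝ) := by exact_mod_cast hτ1
  have hcastτ : ((τ-1:ℕ):ℝ) = (τ:ℝ)-1 := by rw [Nat.cast_sub hτ1, Nat.cast_one]
  -- pointwise sum bound
  have hGsum : ∀ᵐ ω ∂μ,
      ∑ t ∈ Finset.Icc 1 (T-1), (F (x (t+1) ω) (ξ (t+τ) ω) - F xstar (ξ (t+τ) ω))
        ≤ L^2 * ((τ:ℝ)-1) * a * (2 * Real.sqrt T) + (R^2/2) * Real.sqrt T / a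
          + a * L^2 * Real.sqrt T + ((τ:ℝ)-1) * (L * R) := by
    filter_upwards [hstep] with ω hstepω
    -- multi-step distance bound
    have hdist : ∀ t : ℕ, 1 ≤ t → ∀ k : ℕ,
        ‖x (t+1) ω - x (t+1+k) ω‖ ≤ L * k * (a / Real.sqrt t) := by
      intro t ht k
      induction k with
      | zero => simp
      | succ k ih =>
        have h1 := (hstepω (t+1+k) (by omega)).1
        have hsq : Real.sqrt t ≤ Real.sqrt ((t:ℝ)+1+k) := by
          apply Real.sqrt_le_sqrt; linarith
        have hst : (0:ℝ) < Real.sqrt t := Real.sqrt_pos.mpr (by positivity)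
        have hmono : a / Real.sqrt ((t+1+k:ℕ):ℝ) ≤ a / Real.sqrt t := by
          have : ((t+1+k:ℕ):ℝ) = (t:ℝ)+1+k := by push_cast; ring
          rw [this]
          gcongr
        have htri : ‖x (t+1) ω - x (t+1+(k+1)) ω‖
            ≤ ‖x (t+1) ω - x (t+1+k) ω‖ + ‖x (t+1+k) ω - x (t+1+k+1) ω‖ := by
          have heq : x (t+1) ω - x (t+1+(k+1)) ω
              = (x (t+1) ω - x (t+1+k) ω) + (x (t+1+k) ω - x (t+1+k+1) ω) := by
            abel_nf
          rw [heq]; exact norm_add_le _ _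
        have h2 : ‖x (t+1+k) ω - x (t+1+k+1) ω‖ ≤ a / Real.sqrt t * L := by
          rw [norm_sub_rev]
          exact le_trans h1 (mul_le_mul_of_nonneg_right hmono hL.le)
        calc ‖x (t+1) ω - x (t+1+(k+1)) ω‖
            ≤ L * k * (a / Real.sqrt t) + a / Real.sqrt t * L := by
              exact le_trans htri (add_le_add ih h2)
          _ = L * (k+1:ℕ) * (a / Real.sqrt t) := by push_cast; ring
    -- the B part
    have hB : ∀ t ∈ Finset.Icc 1 (T-1),
        F (x (t+1) ω) (ξ (t+τ) ω) - F (x (t+τ) ω) (ξ (t+τ) ω)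
          ≤ L^2 * ((τ:ℝ)-1) * (a * (Real.sqrt t)⁻¹) := by
      intro t htmem
      rw [Finset.mem_Icc] at htmem
      have hd := hdist t htmem.1 (τ-1)
      have he1 : t+1+(τ-1) = t+τ := by omega
      rw [he1] at hd
      calc F (x (t+1) ω) (ξ (t+τ) ω) - F (x (t+τ) ω) (ξ (t+τ) ω)
          ≤ |F (x (t+1) ω) (ξ (t+τ) ω) - F (x (t+τ) ω) (ξ (t+τ) ω)| := le_abs_self _
        _ ≤ L * ‖x (t+1) ω - x (t+τ) ω‖ := hFLip _ _ (hxX _ ω) _ (hxX _ ω)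
        _ ≤ L * (L * ((τ-1:ℕ):ℝ) * (a / Real.sqrt t)) :=
            mul_le_mul_of_nonneg_left hd hL.le
        _ = L^2 * ((τ:ℝ)-1) * (a * (Real.sqrt t)⁻¹) := by rw [hcastτ]; ring
    have hsum_inv : ∀ n : ℕ, n ≤ T →
        ∑ t ∈ Finset.Icc 1 n, (Real.sqrt t)⁻¹ ≤ 2 * Real.sqrt T := by
      intro n hn
      calc ∑ t ∈ Finset.Icc 1 n, (Real.sqrt t)⁻¹
          ≤ ∑ t ∈ Finset.Icc 1 T, (Real.sqrt t)⁻¹ := by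
            apply Finset.sum_le_sum_of_subset_of_nonneg
            · exact Finset.Icc_subset_Icc_right hn
            · intro i _ _; positivity
        _ ≤ 2 * Real.sqrt T := sqrt_inv_sum_le T
    -- the B sum
    have hBsum : ∑ t ∈ Finset.Icc 1 (T-1),
        (F (x (t+1) ω) (ξ (t+τ) ω) - F (x (t+τ) ω) (ξ (t+τ) ω))
          ≤ L^2 * ((τ:ℝ)-1) * a * (2 * Real.sqrt T) := by
      calc ∑ t ∈ Finset.Icc 1 (T-1),
          (F (x (t+1) ω) (ξ (t+τ) ω) - F (x (t+τ) ω) (ξ (t+τ) ω))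
          ≤ ∑ t ∈ Finset.Icc 1 (T-1), L^2 * ((τ:ℝ)-1) * (a * (Real.sqrt t)⁻¹) :=
            Finset.sum_le_sum hB
        _ = L^2 * ((τ:ℝ)-1) * a * ∑ t ∈ Finset.Icc 1 (T-1), (Real.sqrt t)⁻¹ := by
            rw [Finset.mul_sum]
            apply Finset.sum_congr rfl
            intros; ring
        _ ≤ L^2 * ((τ:ℝ)-1) * a * (2 * Real.sqrt T) := by
            apply mul_le_mul_of_nonneg_left (hsum_inv (T-1) (by omega))
            have h0 : (0:ℝ) ≤ (τ:ℝ)-1 := by linarith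
            positivity
    -- the C sum
    set C' : ℕ → ℝ := fun s => F (x s ω) (ξ s ω) - F xstar (ξ s ω) with hC'def
    set d : ℕ → ℝ := fun s => D xstar (x s ω) with hd_def
    have hCsum : ∑ t ∈ Finset.Icc 1 (T-1), C' (t+τ)
        ≤ (R^2/2) * Real.sqrt T / a + a * L^2 * Real.sqrt T + ((τ:ℝ)-1) * (L * R) := by
      have hre : ∑ t ∈ Finset.Icc 1 (T-1), C' (t+τ)
          = ∑ s ∈ Finset.Icc (1+τ) (T-1+τ), C' s := by
        rw [← Finset.map_add_right_Icc, Finset.sum_map]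
        rfl
      have hfil : (Finset.Icc (1+τ) (T-1+τ)).filter (fun s => s ≤ T)
          = Finset.Icc (τ+1) T := by
        ext s
        simp only [Finset.mem_filter, Finset.mem_Icc]
        omega
      have hsplit := Finset.sum_filter_add_sum_filter_not
        (Finset.Icc (1+τ) (T-1+τ)) (fun s => s ≤ T) C'
      -- part 1 : regret on Icc (τ+1) T
      have hpart1 : ∑ s ∈ Finset.Icc (τ+1) T, C' s
          ≤ (R^2/2) * Real.sqrt T / a + a * L^2 * Real.sqrt T := by
        have hstep2 : ∀ s ∈ Finset.Icc (τ+1) T, C' s ≤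
            (d s - d (s+1)) * Real.sqrt s / a + a / Real.sqrt s * L^2/2 := by
          intro s hsmem
          rw [Finset.mem_Icc] at hsmem
          exact (hstepω s (by omega)).2
        calc ∑ s ∈ Finset.Icc (τ+1) T, C' s
            ≤ ∑ s ∈ Finset.Icc (τ+1) T,
              ((d s - d (s+1)) * Real.sqrt s / a + a / Real.sqrt s * L^2/2) :=
              Finset.sum_le_sum hstep2
          _ = (∑ s ∈ Finset.Icc (τ+1) T, (d s - d (s+1)) * Real.sqrt s) / a
              + (a * L^2/2) * ∑ s ∈ Finset.Icc (τ+1) T, (Real.sqrt s)⁻¹ := by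
              rw [Finset.sum_add_distrib, Finset.sum_div, Finset.mul_sum]
              congr 1
              apply Finset.sum_congr rfl
              intros; ring
          _ ≤ (R^2/2 * Real.sqrt T) / a + (a * L^2/2) * (2 * Real.sqrt T) := by
              apply add_le_add
              · gcongr
                exact abel_sum d (R^2/2)
                  (fun s => hD0 xstar hxstar (x s ω) (hxX s ω))
                  (fun s => hDR xstar hxstar (x s ω) (hxX s ω)) (τ+1) T
              · apply mul_le_mul_of_nonneg_left ?_ (by positivity)
                calc ∑ s ∈ Finset.Icc (τ+1) T, (Real.sqrt s)⁻¹
                    ≤ ∑ s ∈ Finset.Icc 1 T, (Real.sqrt s)⁻¹ := by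
                      apply Finset.sum_le_sum_of_subset_of_nonneg
                      · apply Finset.Icc_subset_Icc_left; omega
                      · intro i _ _; positivity
                  _ ≤ 2 * Real.sqrt T := sqrt_inv_sum_le T
          _ = (R^2/2) * Real.sqrt T / a + a * L^2 * Real.sqrt T := by ring
      -- part 2 : the tail
      have hpart2 : ∑ s ∈ (Finset.Icc (1+τ) (T-1+τ)).filter (fun s => ¬ s ≤ T), C' s
          ≤ ((τ:ℝ)-1) * (L * R) := by
        have hterm : ∀ s ∈ (Finset.Icc (1+τ) (T-1+τ)).filter (fun s => ¬ s ≤ T),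
            C' s ≤ L * R := by
          intro s _
          calc C' s ≤ |F (x s ω) (ξ s ω) - F xstar (ξ s ω)| := le_abs_self _
            _ ≤ L * ‖x s ω - xstar‖ := hFLip _ _ (hxX _ ω) _ hxstar
            _ ≤ L * R := mul_le_mul_of_nonneg_left (hdiam _ (hxX s ω) _ hxstar) hL.le
        have hcard : ((Finset.Icc (1+τ) (T-1+τ)).filter (fun s => ¬ s ≤ T)).card ≤ τ - 1 := by
          have hsub2 : (Finset.Icc (1+τ) (T-1+τ)).filter (fun s => ¬ s ≤ T)
              ⊆ Finset.Icc (T+1) (T-1+τ) := by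
            intro s hs
            simp only [Finset.mem_filter, Finset.mem_Icc] at hs ⊢
            omega
          calc ((Finset.Icc (1+τ) (T-1+τ)).filter (fun s => ¬ s ≤ T)).card
              ≤ (Finset.Icc (T+1) (T-1+τ)).card := Finset.card_le_card hsub2
            _ = τ - 1 := by rw [Nat.card_Icc]; omega
        calc ∑ s ∈ (Finset.Icc (1+τ) (T-1+τ)).filter (fun s => ¬ s ≤ T), C' s
            ≤ (((Finset.Icc (1+τ) (T-1+τ)).filter (fun s => ¬ s ≤ T)).card : ℕ) • (L*R) :=
              Finset.sum_le_card_nsmul _ _ _ hterm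
          _ = (((Finset.Icc (1+τ) (T-1+τ)).filter (fun s => ¬ s ≤ T)).card : ℝ) * (L*R) := by
              rw [nsmul_eq_mul]
          _ ≤ ((τ:ℝ)-1) * (L * R) := by
              apply mul_le_mul_of_nonneg_right ?_ (by positivity)
              rw [← hcastτ]
              exact_mod_cast hcard
      rw [hre, ← hsplit, hfil]
      linarith [hpart1, hpart2]
    calc ∑ t ∈ Finset.Icc 1 (T-1), (F (x (t+1) ω) (ξ (t+τ) ω) - F xstar (ξ (t+τ) ω))
        = ∑ t ∈ Finset.Icc 1 (T-1),
          ((F (x (t+1) ω) (ξ (t+τ) ω) - F (x (t+τ) ω) (ξ (t+τ) ω)) + C' (t+τ)) := by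
          apply Finset.sum_congr rfl
          intros; simp only [hC'def]; ring
      _ = ∑ t ∈ Finset.Icc 1 (T-1),
          (F (x (t+1) ω) (ξ (t+τ) ω) - F (x (t+τ) ω) (ξ (t+τ) ω))
          + ∑ t ∈ Finset.Icc 1 (T-1), C' (t+τ) := Finset.sum_add_distrib
      _ ≤ L^2 * ((τ:ℝ)-1) * a * (2 * Real.sqrt T)
          + ((R^2/2) * Real.sqrt T / a + a * L^2 * Real.sqrt T + ((τ:ℝ)-1) * (L * R)) :=
          add_le_add hBsum hCsum
      _ = L^2 * ((τ:ℝ)-1) * a * (2 * Real.sqrt T) + (R^2/2) * Real.sqrt T / a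
          + a * L^2 * Real.sqrt T + ((τ:ℝ)-1) * (L * R) := by ring
  -- expectation of the mixing term
  have hmixE : ∀ t : ℕ, 1 ≤ t →
      ∫ ω, (f (x (t+1) ω) - f xstar - F (x (t+1) ω) (ξ (t+τ) ω)
        + F xstar (ξ (t+τ) ω)) ∂μ ≤ ε * L * R := by
    intro t ht
    have hsm : StronglyMeasurable[ℱ t] (x (t+1)) := by
      have := hxmeas (t+1) (by omega)
      simpa using this
    have hcond := hmix t ht (x (t+1)) hsm (fun ω => hxX (t+1) ω)
      (hfxint (t+1)) (hFxint (t+1) (t+τ))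
    rw [← integral_condExp (ℱ.le t)]
    calc ∫ ω, (μ[(fun ω => f (x (t+1) ω) - f xstar - F (x (t+1) ω) (ξ (t+τ) ω)
          + F xstar (ξ (t+τ) ω)) | ℱ t]) ω ∂μ
        ≤ ∫ _, ε * L * R ∂μ := by
          apply integral_mono_ae integrable_condExp (integrable_const _)
          filter_upwards [hcond] with ω hω
          exact le_trans (le_abs_self _) hω
      _ = ε * L * R := by simp
  -- per-iterate expectation bound
  have hperT : ∀ t : ℕ, 1 ≤ t →
      ∫ ω, (f (x (t+1) ω) - f xstar) ∂μ ≤ ε * L * R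
        + ∫ ω, (F (x (t+1) ω) (ξ (t+τ) ω) - F xstar (ξ (t+τ) ω)) ∂μ := by
    intro t ht
    have hAint : Integrable (fun ω => f (x (t+1) ω) - f xstar
        - F (x (t+1) ω) (ξ (t+τ) ω) + F xstar (ξ (t+τ) ω)) μ :=
      (((hfxint (t+1)).sub (integrable_const _)).sub (hFxint (t+1) (t+τ))).add
        (hFstarint (t+τ))
    have hGint : Integrable (fun ω => F (x (t+1) ω) (ξ (t+τ) ω)
        - F xstar (ξ (t+τ) ω)) μ := (hFxint (t+1) (t+τ)).sub (hFstarint (t+τ))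
    have hsplit2 : (fun ω => f (x (t+1) ω) - f xstar)
        = (fun ω => (f (x (t+1) ω) - f xstar - F (x (t+1) ω) (ξ (t+τ) ω)
            + F xstar (ξ (t+τ) ω))
          + (F (x (t+1) ω) (ξ (t+τ) ω) - F xstar (ξ (t+τ) ω))) := by
      funext ω; ring
    rw [hsplit2, integral_add hAint hGint]
    exact add_le_add_left (hmixE t ht) _
  -- sum of the G terms
  have hsumG : ∑ t ∈ Finset.Icc 1 (T-1),
      ∫ ω, (F (x (t+1) ω) (ξ (t+τ) ω) - F xstar (ξ (t+τ) ω)) ∂μ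
      ≤ L^2 * ((τ:ℝ)-1) * a * (2 * Real.sqrt T) + (R^2/2) * Real.sqrt T / a
        + a * L^2 * Real.sqrt T + ((τ:ℝ)-1) * (L * R) := by
    have hGint' : ∀ i : ℕ, Integrable
        (fun ω => F (x (i+1) ω) (ξ (i+τ) ω) - F xstar (ξ (i+τ) ω)) μ :=
      fun i => (hFxint (i+1) (i+τ)).sub (hFstarint (i+τ))
    rw [← integral_finset_sum _ (fun i _ => hGint' i)]
    calc ∫ ω, ∑ t ∈ Finset.Icc 1 (T-1),
          (F (x (t+1) ω) (ξ (t+τ) ω) - F xstar (ξ (t+τ) ω)) ∂μ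
        ≤ ∫ _, (L^2 * ((τ:ℝ)-1) * a * (2 * Real.sqrt T) + (R^2/2) * Real.sqrt T / a
            + a * L^2 * Real.sqrt T + ((τ:ℝ)-1) * (L * R)) ∂μ := by
          apply integral_mono_ae (integrable_finset_sum _
            (fun i _ => hGint' i)) (integrable_const _) hGsum
      _ = _ := by simp
  -- total sum over all iterates
  have hcastT : ((T-1:ℕ):ℝ) = (T:ℝ)-1 := by rw [Nat.cast_sub hT, Nat.cast_one]
  have htot : ∑ t ∈ Finset.Icc 1 T, ∫ ω, (f (x t ω) - f xstar) ∂μ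
      ≤ L * R + ((T:ℝ)-1) * (ε * L * R)
        + (L^2 * ((τ:ℝ)-1) * a * (2 * Real.sqrt T) + (R^2/2) * Real.sqrt T / a
          + a * L^2 * Real.sqrt T + ((τ:ℝ)-1) * (L * R)) := by
    have hIccT : Finset.Icc 1 T = insert 1 (Finset.Icc 2 T) := by
      ext s; simp only [Finset.mem_insert, Finset.mem_Icc]; omega
    have h1notin : (1:ℕ) ∉ Finset.Icc 2 T := by simp
    rw [hIccT, Finset.sum_insert h1notin]
    have hre2 : ∑ t ∈ Finset.Icc 2 T, ∫ ω, (f (x t ω) - f xstar) ∂μ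
        = ∑ t ∈ Finset.Icc 1 (T-1), ∫ ω, (f (x (t+1) ω) - f xstar) ∂μ := by
      have hmapI : Finset.Icc 2 T = Finset.map (addRightEmbedding 1) (Finset.Icc 1 (T-1)) := by
        rw [Finset.map_add_right_Icc]; congr 1; omega
      rw [hmapI, Finset.sum_map]; rfl
    have hfirst : ∫ ω, (f (x 1 ω) - f xstar) ∂μ ≤ L * R := by
      calc ∫ ω, (f (x 1 ω) - f xstar) ∂μ ≤ ∫ _, L * R ∂μ := by
            apply integral_mono ((hfxint 1).sub (integrable_const _)) (integrable_const _)
            intro ω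
            exact le_trans (hfdiff _ (hxX 1 ω) _ hxstar)
              (mul_le_mul_of_nonneg_left (hdiam _ (hxX 1 ω) _ hxstar) hL.le)
        _ = L * R := by simp
    have hrest : ∑ t ∈ Finset.Icc 1 (T-1), ∫ ω, (f (x (t+1) ω) - f xstar) ∂μ
        ≤ ((T:ℝ)-1) * (ε * L * R)
          + (L^2 * ((τ:ℝ)-1) * a * (2 * Real.sqrt T) + (R^2/2) * Real.sqrt T / a
            + a * L^2 * Real.sqrt T + ((τ:ℝ)-1) * (L * R)) := by
      calc ∑ t ∈ Finset.Icc 1 (T-1), ∫ ω, (f (x (t+1) ω) - f xstar) ∂μ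
          ≤ ∑ t ∈ Finset.Icc 1 (T-1), (ε * L * R
              + ∫ ω, (F (x (t+1) ω) (ξ (t+τ) ω) - F xstar (ξ (t+τ) ω)) ∂μ) := by
            apply Finset.sum_le_sum
            intro t htmem
            rw [Finset.mem_Icc] at htmem
            exact hperT t htmem.1
        _ = ((T-1:ℕ):ℝ) * (ε * L * R) + ∑ t ∈ Finset.Icc 1 (T-1),
              ∫ ω, (F (x (t+1) ω) (ξ (t+τ) ω) - F xstar (ξ (t+τ) ω)) ∂μ := by
            rw [Finset.sum_add_distrib, Finset.sum_const, Nat.card_Icc, nsmul_eq_mul]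
            norm_num
        _ ≤ ((T:ℝ)-1) * (ε * L * R)
            + (L^2 * ((τ:ℝ)-1) * a * (2 * Real.sqrt T) + (R^2/2) * Real.sqrt T / a
              + a * L^2 * Real.sqrt T + ((τ:ℝ)-1) * (L * R)) := by
            rw [hcastT]
            exact add_le_add_right hsumG _
    rw [hre2]
    linarith [hfirst, hrest]
  -- Jensen
  have hw : ∑ _t ∈ Finset.Icc 1 T, (T:ℝ)⁻¹ = 1 := by
    rw [Finset.sum_const, Nat.card_Icc, nsmul_eq_mul]
    norm_num
    field_simp
  have hJ : ∀ ω, f ((T:ℝ)⁻¹ • ∑ t ∈ Finset.Icc 1 T, x t ω) - f xstar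
      ≤ ∑ t ∈ Finset.Icc 1 T, (T:ℝ)⁻¹ * (f (x t ω) - f xstar) := by
    intro ω
    have hmap := hfconv.map_sum_le (t := Finset.Icc 1 T) (w := fun _ => (T:ℝ)⁻¹)
      (p := fun t => x t ω) (fun i _ => by positivity) hw (fun i _ => hxX i ω)
    have hsm : (T:ℝ)⁻¹ • ∑ t ∈ Finset.Icc 1 T, x t ω
        = ∑ t ∈ Finset.Icc 1 T, (T:ℝ)⁻¹ • x t ω := Finset.smul_sum
    have h2 : ∑ t ∈ Finset.Icc 1 T, (T:ℝ)⁻¹ • f (x t ω)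
        = ∑ t ∈ Finset.Icc 1 T, (T:ℝ)⁻¹ * (f (x t ω) - f xstar) + f xstar := by
      calc ∑ t ∈ Finset.Icc 1 T, (T:ℝ)⁻¹ • f (x t ω)
          = ∑ t ∈ Finset.Icc 1 T, ((T:ℝ)⁻¹ * (f (x t ω) - f xstar)
              + (T:ℝ)⁻¹ * f xstar) := by
            apply Finset.sum_congr rfl
            intros; simp only [smul_eq_mul]; ring
        _ = ∑ t ∈ Finset.Icc 1 T, (T:ℝ)⁻¹ * (f (x t ω) - f xstar)
            + ∑ _t ∈ Finset.Icc 1 T, (T:ℝ)⁻¹ * f xstar := Finset.sum_add_distrib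
        _ = ∑ t ∈ Finset.Icc 1 T, (T:ℝ)⁻¹ * (f (x t ω) - f xstar) + f xstar := by
            rw [← Finset.sum_mul, hw, one_mul]
    rw [hsm]
    have := hmap
    rw [h2] at this
    linarith
  -- integrate Jensen
  have hfinal1 : ∫ ω, (f ((T:ℝ)⁻¹ • ∑ t ∈ Finset.Icc 1 T, x t ω) - f xstar) ∂μ
      ≤ (T:ℝ)⁻¹ * ∑ t ∈ Finset.Icc 1 T, ∫ ω, (f (x t ω) - f xstar) ∂μ := by
    have hint2 : ∀ i ∈ Finset.Icc 1 T, Integrable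
        (fun ω => (T:ℝ)⁻¹ * (f (x i ω) - f xstar)) μ :=
      fun i _ => ((hfxint i).sub (integrable_const _)).const_mul _
    calc ∫ ω, (f ((T:ℝ)⁻¹ • ∑ t ∈ Finset.Icc 1 T, x t ω) - f xstar) ∂μ
        ≤ ∫ ω, ∑ t ∈ Finset.Icc 1 T, (T:ℝ)⁻¹ * (f (x t ω) - f xstar) ∂μ := by
          apply integral_mono (hfavgint.sub (integrable_const _))
            (integrable_finset_sum _ hint2) hJ
      _ = ∑ t ∈ Finset.Icc 1 T, ∫ ω, (T:ℝ)⁻¹ * (f (x t ω) - f xstar) ∂μ :=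
          integral_finset_sum _ hint2
      _ = ∑ t ∈ Finset.Icc 1 T, (T:ℝ)⁻¹ * ∫ ω, (f (x t ω) - f xstar) ∂μ := by
          apply Finset.sum_congr rfl
          intros; rw [integral_const_mul]
      _ = (T:ℝ)⁻¹ * ∑ t ∈ Finset.Icc 1 T, ∫ ω, (f (x t ω) - f xstar) ∂μ := by
          rw [Finset.mul_sum]
  -- final arithmetic
  have hmain2 : ∫ ω, (f ((T:ℝ)⁻¹ • ∑ t ∈ Finset.Icc 1 T, x t ω) - f xstar) ∂μ
      ≤ (T:ℝ)⁻¹ * (L * R + ((T:ℝ)-1) * (ε * L * R)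
        + (L^2 * ((τ:ℝ)-1) * a * (2 * Real.sqrt T) + (R^2/2) * Real.sqrt T / a
          + a * L^2 * Real.sqrt T + ((τ:ℝ)-1) * (L * R))) :=
    le_trans hfinal1 (mul_le_mul_of_nonneg_left htot (by positivity))
  refine le_trans hmain2 ?_
  rw [inv_mul_le_iff₀ hT0]
  have hstT : Real.sqrt T * Real.sqrt T = (T:ℝ) := Real.mul_self_sqrt (by positivity)
  have hK1 : (1:ℝ) ≤ κ₁ * Real.log (κ₂ / ε) := hκlog
  have hTdiv : (T:ℝ) / Real.sqrt T = Real.sqrt T := Real.div_sqrt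
  have e1 : (T:ℝ) * (R^2 / (2 * a * Real.sqrt T)) = R^2 * Real.sqrt T / (2*a) := by
    field_simp
    linear_combination (-1) * hstT
  have e2 : (T:ℝ) * ((2 * a * L^2 / Real.sqrt T) * (κ₁ * Real.log (κ₂ / ε)))
      = 2 * a * L^2 * (κ₁ * Real.log (κ₂ / ε)) * Real.sqrt T := by
    have h1 : (T:ℝ) * ((2 * a * L^2 / Real.sqrt T) * (κ₁ * Real.log (κ₂ / ε)))
        = (2 * a * L^2 * (κ₁ * Real.log (κ₂ / ε))) * ((T:ℝ) / Real.sqrt T) := by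
      ring
    rw [h1, hTdiv]
  have e3 : (T:ℝ) * (R * L * κ₁ * Real.log (κ₂ / ε) / T)
      = R * L * (κ₁ * Real.log (κ₂ / ε)) := by
    rw [mul_comm ((T:ℝ)) _, div_mul_cancel₀ _ hT0.ne']
    ring
  have c1 : (τ:ℝ) * (L * R) ≤ (κ₁ * Real.log (κ₂ / ε)) * (L * R) :=
    mul_le_mul_of_nonneg_right hτbd (by positivity)
  have c2 : ((T:ℝ)-1) * (ε * L * R) ≤ (T:ℝ) * (ε * L * R) :=
    mul_le_mul_of_nonneg_right (by linarith) (by positivity)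
  have c3 : ((τ:ℝ) * 2 - 1) * (a * L^2 * Real.sqrt T)
      ≤ (2 * (κ₁ * Real.log (κ₂ / ε))) * (a * L^2 * Real.sqrt T) :=
    mul_le_mul_of_nonneg_right (by linarith) (by positivity)
  calc L * R + ((T:ℝ)-1) * (ε * L * R)
        + (L^2 * ((τ:ℝ)-1) * a * (2 * Real.sqrt T) + (R^2/2) * Real.sqrt T / a
          + a * L^2 * Real.sqrt T + ((τ:ℝ)-1) * (L * R))
      = (τ:ℝ) * (L * R) + ((T:ℝ)-1) * (ε * L * R)
        + ((τ:ℝ) * 2 - 1) * (a * L^2 * Real.sqrt T) + R^2 * Real.sqrt T / (2*a) := by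
        field_simp
        ring
    _ ≤ (κ₁ * Real.log (κ₂ / ε)) * (L * R) + (T:ℝ) * (ε * L * R)
        + (2 * (κ₁ * Real.log (κ₂ / ε))) * (a * L^2 * Real.sqrt T)
        + R^2 * Real.sqrt T / (2*a) := by linarith
    _ = (T:ℝ) * (R ^ 2 / (2 * a * Real.sqrt T))
        + (T:ℝ) * ((2 * a * L ^ 2 / Real.sqrt T) * (κ₁ * Real.log (κ₂ / ε)))
        + (T:ℝ) * (ε * L * R)
        + (T:ℝ) * (R * L * κ₁ * Real.log (κ₂ / ε) / T) := by
        rw [e1, e2, e3]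
        ring
    _ = (T:ℝ) * (R ^ 2 / (2 * a * Real.sqrt T)
        + (2 * a * L ^ 2 / Real.sqrt T) * (κ₁ * Real.log (κ₂ / ε))
        + ε * L * R
        + R * L * κ₁ * Real.log (κ₂ / ε) / T) := by ring
end

section
/- Optimization of the mixing-accuracy tradeoff for polynomially mixing processes (the key inequality in the second part of Corollary 6 of the paper, with a corrected constant). Let L > 0, R > 0, M ≥ 1, β ≥ 0, and T ≥ 1 be real numbers. Then inf_{ε > 0} ( 2·ε·L·R + 3·M·ε^{−β}·L·R/√T ) ≤ 2e·L·R·(3M/2)^{1/(β+1)}·T^{−1/(2(β+1))}. -/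
/-- Optimization of the mixing-accuracy tradeoff for polynomially mixing
processes (key inequality in the second part of Corollary 6 of the paper,
with a corrected constant). -/
theorem polynomial_mixing_tradeoff
    (L R M β T : ℝ) (hL : 0 < L) (hR : 0 < R) (hM : 1 ≤ M)
    (hβ : 0 ≤ β) (hT : 1 ≤ T) :
    sInf ((fun ε : ℝ =>
        2 * ε * L * R + 3 * M * ε ^ (-β) * L * R / Real.sqrt T) '' Set.Ioi 0)
      ≤ 2 * Real.exp 1 * L * R * (3 * M / 2) ^ ((1 : ℝ) / (β + 1))
          * T ^ (-(1 / (2 * (β + 1)))) := by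
  have hT0 : (0 : ℝ) < T := lt_of_lt_of_le one_pos hT
  have hsT : 0 < Real.sqrt T := Real.sqrt_pos.mpr hT0
  have hM0 : (0 : ℝ) < M := lt_of_lt_of_le one_pos hM
  have hβ1 : (0 : ℝ) < β + 1 := by linarith
  set c : ℝ := 3 * M / (2 * Real.sqrt T) with hc_def
  have hc : 0 < c := by positivity
  set ε : ℝ := c ^ ((1 : ℝ) / (β + 1)) with hε_def
  have hε : 0 < ε := Real.rpow_pos_of_pos hc _
  have key : (2 * ε * L * R + 3 * M * ε ^ (-β) * L * R / Real.sqrt T)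
      = 4 * L * R * ε := by
    have h1 : ε ^ (-β) = c ^ (-β / (β + 1)) := by
      rw [hε_def, ← Real.rpow_mul hc.le]
      congr 1
      field_simp
    have h2 : 3 * M / Real.sqrt T = 2 * c := by
      rw [hc_def]; field_simp
    have h3 : c * c ^ (-β / (β + 1)) = ε := by
      rw [hε_def]
      nth_rewrite 1 [show c = c ^ (1:ℝ) by rw [Real.rpow_one]]
      rw [← Real.rpow_add hc]
      congr 1
      field_simp
      ring
    have e1 : 3 * M * ε ^ (-β) * L * R / Real.sqrt T
        = (3 * M / Real.sqrt T) * ε ^ (-β) * L * R := by ring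
    rw [e1, h2, h1]
    have e2 : 2 * c * c ^ (-β / (β + 1)) * L * R
        = 2 * (c * c ^ (-β / (β + 1))) * L * R := by ring
    rw [e2, h3]; ring
  have hεval : ε = (3 * M / 2) ^ ((1 : ℝ) / (β + 1)) * T ^ (-(1 / (2 * (β + 1)))) := by
    have hc2 : c = (3 * M / 2) * T ^ (-(1/2) : ℝ) := by
      rw [hc_def, Real.rpow_neg hT0.le, ← Real.sqrt_eq_rpow]
      field_simp
    rw [hε_def, hc2, Real.mul_rpow (by positivity) (by positivity),
      ← Real.rpow_mul hT0.le]
    congr 1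
    field_simp
  have hmem : (2 * ε * L * R + 3 * M * ε ^ (-β) * L * R / Real.sqrt T)
      ∈ ((fun ε : ℝ =>
        2 * ε * L * R + 3 * M * ε ^ (-β) * L * R / Real.sqrt T) '' Set.Ioi 0) :=
    ⟨ε, hε, rfl⟩
  have hbdd : BddBelow ((fun ε : ℝ =>
        2 * ε * L * R + 3 * M * ε ^ (-β) * L * R / Real.sqrt T) '' Set.Ioi 0) := by
    refine ⟨0, ?_⟩
    rintro x ⟨y, hy, rfl⟩
    have hy0 : 0 < y := hy
    have : (0:ℝ) ≤ y ^ (-β) := Real.rpow_nonneg hy0.le _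
    positivity
  refine le_trans (csInf_le hbdd hmem) ?_
  rw [key, hεval]
  have hA : 0 < (3 * M / 2) ^ ((1:ℝ) / (β + 1)) := Real.rpow_pos_of_pos (by positivity) _
  have hB : 0 < T ^ (-(1 / (2 * (β + 1)))) := Real.rpow_pos_of_pos hT0 _
  have hexp : (2:ℝ) ≤ Real.exp 1 := by
    have := Real.add_one_le_exp (1:ℝ)
    linarith
  nlinarith [mul_pos (mul_pos hL hR) (mul_pos hA hB)]
end
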